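/- arXiv:0902.2690 — 11 statements merged into one kernel-verified Lean document; each statement's English description precedes it below -/
import Mathlib

section
/- Let (X, μ) be a measure space, let f ∈ L²(X, μ) be nonzero, and let E > 0. Let G : (0,∞) → [0,∞) be nondecreasing, and define G⁻¹(y) := sup{λ > 0 : G(λ) ≤ y} ∈ [0,∞] (with sup ∅ = 0) and H(y) := y · G⁻¹(y). Suppose that for every λ > 0 there exist g_λ, h_λ ∈ L²(X, μ) with f = g_λ + h_λ almost everywhere, ‖g_λ‖_{L^∞}² ≤ G(λ) · E, and that λ ↦ ‖h_λ‖_{L²}² is measurable with ∫₀^∞ ‖h_λ‖_{L²}² dλ ≤ E. Then ∫_X H(|f(x)|² / (4E)) dμ(x) ≤ 1 (the integral taken in the extended sense with values in [0,∞]). -/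
open MeasureTheory Set ENNReal

/-- analytic core of Theorem 1.1, Sobolev–Orlicz inequality.
Given a spectral-type decomposition `f = g λ + h λ` with `‖g λ‖_∞² ≤ G(λ)·E` and
`∫₀^∞ ‖h λ‖₂² dλ ≤ E`, one has `∫_X H(|f|²/(4E)) dμ ≤ 1` where `H(y) = y·G⁻¹(y)`
and `G⁻¹(y) = sup {λ > 0 | G λ ≤ y}` (computed in `[0,∞]`, with `sup ∅ = 0`). -/
theorem stmt_0 {X : Type*} [MeasurableSpace X] (μ : Measure X)
    (f : X → ℝ) (hf : MemLp f 2 μ) (hf_ne : ¬ f =ᵐ[μ] 0)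
    (E : ℝ) (hE : 0 < E)
    (G : ℝ → ℝ) (hG_nonneg : ∀ l, 0 < l → 0 ≤ G l)
    (hG_mono : ∀ a b, 0 < a → a ≤ b → G a ≤ G b)
    (Ginv : ℝ → ℝ≥0∞)
    (hGinv : ∀ y, Ginv y
      = sSup {t : ℝ≥0∞ | ∃ l : ℝ, 0 < l ∧ G l ≤ y ∧ t = ENNReal.ofReal l})
    (H : ℝ → ℝ≥0∞) (hH : ∀ y, H y = ENNReal.ofReal y * Ginv y)
    (g h : ℝ → X → ℝ)
    (h_dec : ∀ l, 0 < l → MemLp (g l) 2 μ ∧ MemLp (h l) 2 μ ∧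
      f =ᵐ[μ] g l + h l ∧ (eLpNorm (g l) ⊤ μ) ^ 2 ≤ ENNReal.ofReal (G l * E))
    (h_meas : Measurable fun l : ℝ => (eLpNorm (h l) 2 μ) ^ 2)
    (h_int : ∫⁻ l in Ioi (0 : ℝ), (eLpNorm (h l) 2 μ) ^ 2 ≤ ENNReal.ofReal E) :
    ∫⁻ x, H (‖f x‖ ^ 2 / (4 * E)) ∂μ ≤ 1 := by
  classical
  -- measurable representative of f
  obtain ⟨F, hF_sm, hfF⟩ := hf.aestronglyMeasurable
  have hF_meas : Measurable F := hF_sm.measurable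
  -- σ-finite carrier set
  have hfin : AEFinStronglyMeasurable f μ :=
    hf.aefinStronglyMeasurable two_ne_zero ENNReal.ofNat_ne_top
  set T : Set X := hfin.sigmaFiniteSet with hTdef
  have hT_meas : MeasurableSet T := hfin.measurableSet
  haveI : SigmaFinite (μ.restrict T) := hfin.sigmaFinite_restrict
  set μ' : Measure X := μ.restrict T with hμ'
  -- auxiliary functions
  set c : X → ℝ := fun x => ‖F x‖ ^ 2 / (4 * E) with hcdef
  have hc_meas : Measurable c := ((hF_meas.norm.pow_const 2).div_const _)
  set G' : ℝ → ℝ := fun l => if 0 < l then G l else 0 with hG'def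
  have hG'_mono : Monotone G' := by
    intro a b hab
    simp only [G']
    by_cases ha : 0 < a
    · rw [if_pos ha, if_pos (lt_of_lt_of_le ha hab)]
      exact hG_mono a b ha hab
    · rw [if_neg ha]
      by_cases hb : 0 < b
      · rw [if_pos hb]; exact hG_nonneg b hb
      · rw [if_neg hb]
  have hG'_meas : Measurable G' := hG'_mono.measurable
  -- volume computation: measure of sublevel set equals Ginv
  have hvol : ∀ y : ℝ, volume {l : ℝ | 0 < l ∧ G l ≤ y} = Ginv y := by
    intro y
    rw [hGinv]
    apply le_antisymm
    · rcases eq_top_or_lt_top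
        (sSup {t : ℝ≥0∞ | ∃ l : ℝ, 0 < l ∧ G l ≤ y ∧ t = ENNReal.ofReal l}) with hs | hs
      · rw [hs]; exact le_top
      · set s := sSup {t : ℝ≥0∞ | ∃ l : ℝ, 0 < l ∧ G l ≤ y ∧ t = ENNReal.ofReal l} with hsdef
        have hsub : {l : ℝ | 0 < l ∧ G l ≤ y} ⊆ Ioc 0 s.toReal := by
          intro l hl
          refine ⟨hl.1, ?_⟩
          have hle : ENNReal.ofReal l ≤ s := le_sSup ⟨l, hl.1, hl.2, rfl⟩
          exact (ENNReal.ofReal_le_iff_le_toReal hs.ne).1 hle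
        calc volume {l : ℝ | 0 < l ∧ G l ≤ y} ≤ volume (Ioc 0 s.toReal) :=
              measure_mono hsub
          _ = ENNReal.ofReal s.toReal := by rw [Real.volume_Ioc, sub_zero]
          _ = s := ENNReal.ofReal_toReal hs.ne
    · apply sSup_le
      rintro t ⟨l, hl0, hly, rfl⟩
      calc ENNReal.ofReal l = volume (Ioo (0 : ℝ) l) := by rw [Real.volume_Ioo, sub_zero]
        _ ≤ volume {l : ℝ | 0 < l ∧ G l ≤ y} := by
            refine measure_mono fun m hm => ?_
            exact ⟨hm.1, le_trans (hG_mono m l hm.1 hm.2.le) hly⟩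
  -- squared L² norm as a lintegral
  have hsq : ∀ u : X → ℝ, (eLpNorm u 2 μ) ^ 2 = ∫⁻ x, (‖u x‖₊ : ℝ≥0∞) ^ 2 ∂μ := by
    intro u
    rw [eLpNorm_eq_lintegral_rpow_enorm_toReal two_ne_zero ENNReal.ofNat_ne_top]
    rw [← ENNReal.rpow_natCast _ 2, ← ENNReal.rpow_mul]
    norm_num
    rfl
  -- the double-variable integrand
  set d : X → ℝ≥0∞ := fun x => ENNReal.ofReal (‖F x‖ ^ 2 / 4) with hddef
  have hd_meas : Measurable d :=
    ENNReal.measurable_ofReal.comp ((hF_meas.norm.pow_const 2).div_const _)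
  set S : Set (X × ℝ) := {p | G' p.2 ≤ c p.1} with hSdef
  have hS_meas : MeasurableSet S :=
    measurableSet_le (hG'_meas.comp measurable_snd) (hc_meas.comp measurable_fst)
  set Φ : X → ℝ → ℝ≥0∞ := fun x l => S.indicator (fun p => d p.1) (x, l) with hΦdef
  have hΦ_meas : Measurable (Function.uncurry Φ) := by
    have : Function.uncurry Φ = S.indicator (fun p => d p.1) := by
      funext p; cases p; rfl
    rw [this]
    exact (hd_meas.comp measurable_fst).indicator hS_meas
  -- inner integral computation
  have hinner : ∀ x : X, ∫⁻ l in Ioi (0 : ℝ), Φ x l = d x * Ginv (c x) := by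
    intro x
    have hset : MeasurableSet {l : ℝ | G' l ≤ c x} :=
      measurableSet_le hG'_meas measurable_const
    have hΦeq : ∀ l : ℝ, Φ x l = ({l : ℝ | G' l ≤ c x}).indicator (fun _ => d x) l := by
      intro l
      simp only [Φ, S, Set.indicator_apply, mem_setOf_eq]
    calc ∫⁻ l in Ioi (0 : ℝ), Φ x l
        = ∫⁻ l in Ioi (0 : ℝ), ({l : ℝ | G' l ≤ c x}).indicator (fun _ => d x) l := by
          simp_rw [hΦeq]
      _ = ∫⁻ l in {l : ℝ | G' l ≤ c x}, d x ∂(volume.restrict (Ioi 0)) :=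
          lintegral_indicator hset _
      _ = d x * (volume.restrict (Ioi 0)) {l : ℝ | G' l ≤ c x} := setLIntegral_const _ _
      _ = d x * volume ({l : ℝ | G' l ≤ c x} ∩ Ioi 0) := by
          rw [Measure.restrict_apply hset]
      _ = d x * Ginv (c x) := by
          have hSeq : {l : ℝ | G' l ≤ c x} ∩ Ioi 0 = {l : ℝ | 0 < l ∧ G l ≤ c x} := by
            ext m
            simp only [mem_inter_iff, mem_setOf_eq, mem_Ioi, G']
            constructor
            · rintro ⟨hm1, hm2⟩
              rw [if_pos hm2] at hm1
              exact ⟨hm2, hm1⟩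
            · rintro ⟨hm1, hm2⟩
              rw [if_pos hm1]
              exact ⟨hm2, hm1⟩
          rw [hSeq, hvol (c x)]
  -- slice bound: for l > 0, ∫ Φ · l ∂μ ≤ ‖h l‖₂²
  have hK : ∀ l : ℝ, 0 < l → ∫⁻ x, Φ x l ∂μ ≤ (eLpNorm (h l) 2 μ) ^ 2 := by
    intro l hl
    obtain ⟨-, -, hgh, hgT⟩ := h_dec l hl
    rw [hsq (h l)]
    refine lintegral_mono_ae ?_
    filter_upwards [hgh, hfF, enorm_ae_le_eLpNormEssSup (g l) μ] with x hx1 hx2 hx3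
    by_cases hcond : (x, l) ∈ S
    · have hGlc : G l ≤ c x := by
        have h' : (if 0 < l then G l else 0) ≤ c x := hcond
        rwa [if_pos hl] at h'
      have h1 : (‖g l x‖₊ : ℝ≥0∞) ^ 2 ≤ ENNReal.ofReal (G l * E) := by
        calc (‖g l x‖₊ : ℝ≥0∞) ^ 2 ≤ (eLpNormEssSup (g l) μ) ^ 2 :=
              pow_le_pow_left₀ (zero_le) hx3 2
          _ = (eLpNorm (g l) ⊤ μ) ^ 2 := by rw [eLpNorm_exponent_top]
          _ ≤ ENNReal.ofReal (G l * E) := hgT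
      have h2 : G l * E ≤ (‖F x‖ / 2) ^ 2 := by
        have hm := mul_le_mul_of_nonneg_right hGlc hE.le
        have heq : ‖F x‖ ^ 2 / (4 * E) * E = (‖F x‖ / 2) ^ 2 := by
          field_simp; ring
        calc G l * E ≤ ‖F x‖ ^ 2 / (4 * E) * E := hm
          _ = (‖F x‖ / 2) ^ 2 := heq
      have h3 : ENNReal.ofReal (‖g l x‖ ^ 2) ≤ ENNReal.ofReal ((‖F x‖ / 2) ^ 2) := by
        calc ENNReal.ofReal (‖g l x‖ ^ 2) = (‖g l x‖₊ : ℝ≥0∞) ^ 2 := by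
              rw [ENNReal.ofReal_pow (norm_nonneg _), ofReal_norm, enorm_eq_nnnorm]
          _ ≤ ENNReal.ofReal (G l * E) := h1
          _ ≤ ENNReal.ofReal ((‖F x‖ / 2) ^ 2) := ENNReal.ofReal_le_ofReal h2
      have h4 : ‖g l x‖ ^ 2 ≤ (‖F x‖ / 2) ^ 2 := by
        rwa [ENNReal.ofReal_le_ofReal_iff (by positivity)] at h3
      have h5 : ‖g l x‖ ≤ ‖F x‖ / 2 := by
        nlinarith [norm_nonneg (g l x), norm_nonneg (F x)]
      have h6 : ‖F x‖ / 2 ≤ ‖h l x‖ := by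
        have hhx : h l x = f x - g l x := by
          have : f x = g l x + h l x := hx1
          linarith
        have hns : ‖f x‖ - ‖g l x‖ ≤ ‖f x - g l x‖ := norm_sub_norm_le _ _
        rw [hhx]
        rw [hx2] at hns ⊢
        linarith
      calc Φ x l = d x := by rw [hΦdef]; exact Set.indicator_of_mem hcond _
        _ = ENNReal.ofReal ((‖F x‖ / 2) ^ 2) := by rw [hddef]; congr 1; ring
        _ ≤ ENNReal.ofReal (‖h l x‖ ^ 2) :=
            ENNReal.ofReal_le_ofReal (pow_le_pow_left₀ (by positivity) h6 2)
        _ = (‖h l x‖₊ : ℝ≥0∞) ^ 2 := by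
            rw [ENNReal.ofReal_pow (norm_nonneg _), ofReal_norm, enorm_eq_nnnorm]
    · have : Φ x l = 0 := by rw [hΦdef]; exact Set.indicator_of_notMem hcond _
      rw [this]; exact zero_le
  -- main estimate on the σ-finite part
  have key : ENNReal.ofReal E * ∫⁻ x, H (c x) ∂μ' ≤ ENNReal.ofReal E := by
    rw [← lintegral_const_mul' _ _ ENNReal.ofReal_ne_top]
    calc ∫⁻ x, ENNReal.ofReal E * H (c x) ∂μ'
        = ∫⁻ x, (∫⁻ l in Ioi (0 : ℝ), Φ x l) ∂μ' := by
          refine lintegral_congr fun x => ?_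
          rw [hinner x, hH, hddef]
          rw [← mul_assoc, ← ENNReal.ofReal_mul hE.le]
          congr 2
          rw [hcdef]
          field_simp
      _ = ∫⁻ l in Ioi (0 : ℝ), (∫⁻ x, Φ x l ∂μ') :=
          lintegral_lintegral_swap hΦ_meas.aemeasurable
      _ ≤ ∫⁻ l in Ioi (0 : ℝ), (eLpNorm (h l) 2 μ) ^ 2 := by
          refine setLIntegral_mono h_meas fun l hl => ?_
          calc ∫⁻ x, Φ x l ∂μ' ≤ ∫⁻ x, Φ x l ∂μ :=
                lintegral_mono' Measure.restrict_le_self le_rfl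
            _ ≤ (eLpNorm (h l) 2 μ) ^ 2 := hK l hl
      _ ≤ ENNReal.ofReal E := h_int
  have hI : ∫⁻ x, H (c x) ∂μ' ≤ 1 := by
    have hE0 : ENNReal.ofReal E ≠ 0 := by
      simp [ENNReal.ofReal_eq_zero, not_le, hE]
    rw [← ENNReal.mul_le_mul_iff_right hE0 ENNReal.ofReal_ne_top, mul_one]
    exact key
  -- reduce the full integral to the σ-finite part
  have hsplit : ∫⁻ x, H (‖f x‖ ^ 2 / (4 * E)) ∂μ
      = ∫⁻ x in T, H (‖f x‖ ^ 2 / (4 * E)) ∂μ + ∫⁻ x in Tᶜ, H (‖f x‖ ^ 2 / (4 * E)) ∂μ :=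
    (lintegral_add_compl _ hT_meas).symm
  have hcompl : ∫⁻ x in Tᶜ, H (‖f x‖ ^ 2 / (4 * E)) ∂μ = 0 := by
    have hz : f =ᵐ[μ.restrict Tᶜ] 0 := hfin.ae_eq_zero_compl
    have : (fun x => H (‖f x‖ ^ 2 / (4 * E))) =ᵐ[μ.restrict Tᶜ] fun _ => 0 := by
      filter_upwards [hz] with x hx
      rw [hx]
      simp [hH 0]
    rw [lintegral_congr_ae this, lintegral_zero]
  have hT_eq : ∫⁻ x in T, H (‖f x‖ ^ 2 / (4 * E)) ∂μ = ∫⁻ x, H (c x) ∂μ' := by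
    refine lintegral_congr_ae ?_
    filter_upwards [ae_restrict_of_ae hfF] with x hx
    rw [hcdef, hx]
  rw [hsplit, hcompl, add_zero, hT_eq]
  exact hI
end

section
/- Let (X, μ) be a measure space, let f ∈ L²(X, μ) be nonzero, and let E > 0. Let M : (0,∞) → [0,∞) be nonincreasing, and define M⁻¹(y) := inf{t > 0 : M(t) ≤ y} ∈ [0,∞] (with inf ∅ = ∞), and N(y) := y / M⁻¹(y) ∈ [0,∞] (with y/∞ = 0 and y/0 = ∞ for y > 0). Suppose that for every t > 0 there exist g_t, h_t ∈ L²(X, μ) with f = g_t + h_t almost everywhere, ‖g_t‖_{L^∞}² ≤ M(t) · E, and that t ↦ ‖h_t‖_{L²}² is measurable with ∫₀^∞ ‖h_t‖_{L²}² t^{-2} dt ≤ (ln 2) · E. Then ∫_X N(|f(x)|² / (4E)) dμ(x) ≤ ln 2 (the integral taken in the extended sense). -/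
open MeasureTheory Set ENNReal

lemma aux1 {c : ℝ} (hc : 0 < c) :
    ∫⁻ s in Ioi c, ENNReal.ofReal (s⁻¹ ^ 2) = ENNReal.ofReal c⁻¹ := by
  have hcong : ∀ᵐ s ∂(volume.restrict (Ioi c)), ENNReal.ofReal (s⁻¹ ^ 2)
      = ENNReal.ofReal (s ^ (-2 : ℝ)) := by
    filter_upwards [ae_restrict_mem measurableSet_Ioi] with s hs
    have hs0 : 0 < s := hc.trans hs
    rw [Real.rpow_neg hs0.le, show (2:ℝ) = ((2:ℕ):ℝ) by norm_num, Real.rpow_natCast, inv_pow]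
  rw [lintegral_congr_ae hcong,
    ← ofReal_integral_eq_lintegral_ofReal (integrableOn_Ioi_rpow_of_lt (by norm_num) hc)
      (by filter_upwards [ae_restrict_mem measurableSet_Ioi] with s hs
          exact Real.rpow_nonneg ((hc.trans hs).le) _),
    integral_Ioi_rpow_of_lt (by norm_num) hc]
  norm_num
  rw [Real.rpow_neg_one]

lemma aux2 : ∫⁻ s in Ioi (0:ℝ), ENNReal.ofReal (s⁻¹ ^ 2) = ⊤ := by
  rw [eq_top_iff, ← ENNReal.iSup_natCast]
  refine iSup_le fun n => ?_
  rcases Nat.eq_zero_or_pos n with hn | hn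
  · simp [hn]
  · have hn' : (0:ℝ) < (n:ℝ)⁻¹ := by positivity
    calc ((n:ℝ≥0∞)) = ENNReal.ofReal ((n:ℝ)⁻¹)⁻¹ := by
          rw [inv_inv, ENNReal.ofReal_natCast]
      _ = ∫⁻ s in Ioi ((n:ℝ)⁻¹), ENNReal.ofReal (s⁻¹ ^ 2) := (aux1 hn').symm
      _ ≤ ∫⁻ s in Ioi (0:ℝ), ENNReal.ofReal (s⁻¹ ^ 2) :=
          lintegral_mono_set (Ioi_subset_Ioi hn'.le)

lemma aux3 (a : ℝ≥0∞) :
    a⁻¹ ≤ ∫⁻ s in Ioi (0:ℝ),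
      (if a < ENNReal.ofReal s then ENNReal.ofReal (s⁻¹ ^ 2) else 0) := by
  rcases eq_or_ne a ⊤ with rfl | ha
  · simp
  have hfun : (fun s : ℝ => if a < ENNReal.ofReal s then ENNReal.ofReal (s⁻¹ ^ 2) else 0)
      = (Ioi a.toReal).indicator (fun s => ENNReal.ofReal (s⁻¹ ^ 2)) := by
    funext s
    simp only [Set.indicator_apply, mem_Ioi]
    exact if_congr (ENNReal.lt_ofReal_iff_toReal_lt ha) rfl rfl
  rw [hfun, lintegral_indicator measurableSet_Ioi,
    Measure.restrict_restrict measurableSet_Ioi, Ioi_inter_Ioi,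
    max_eq_left ENNReal.toReal_nonneg]
  rcases eq_or_ne a 0 with rfl | ha0
  · rw [show (0:ℝ≥0∞).toReal = 0 from rfl, aux2]
    exact le_top
  · have hpos : 0 < a.toReal := ENNReal.toReal_pos ha0 ha
    rw [aux1 hpos]
    refine le_of_eq ?_
    conv_lhs => rw [← ENNReal.ofReal_toReal ha]
    rw [← ENNReal.ofReal_inv_of_pos hpos]

lemma aux4 {α : Type*} [MeasurableSpace α] (μ : Measure α) (φ : α → ℝ) :
    (eLpNorm φ 2 μ) ^ 2 = ∫⁻ x, ((‖φ x‖₊ : ℝ≥0∞)) ^ 2 ∂μ := by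
  rw [eLpNorm_eq_lintegral_rpow_enorm_toReal two_ne_zero ENNReal.ofNat_ne_top]
  simp only [enorm_eq_nnnorm]
  have h2 : ((2:ℝ≥0∞)).toReal = ((2:ℕ):ℝ) := by norm_num
  rw [h2, ← ENNReal.rpow_natCast _ 2, ← ENNReal.rpow_mul]
  norm_num


/-- analytic core of Theorem 1.2, heat Sobolev–Orlicz inequality.
Given a heat-type decomposition `f = g t + h t` with `‖g t‖_∞² ≤ M(t)·E` and
`∫₀^∞ ‖h t‖₂² t⁻² dt ≤ (ln 2)·E`, one has `∫_X N(|f|²/(4E)) dμ ≤ ln 2`, where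
`N(y) = y / M⁻¹(y)` and `M⁻¹(y) = inf {t > 0 | M t ≤ y}` (computed in `[0,∞]`,
with `inf ∅ = ∞`; the division in `[0,∞]` has `y/∞ = 0` and `y/0 = ∞` for `y > 0`). -/
theorem stmt_1 {X : Type*} [MeasurableSpace X] (μ : Measure X)
    (f : X → ℝ) (hf : MemLp f 2 μ) (hf_ne : ¬ f =ᵐ[μ] 0)
    (E : ℝ) (hE : 0 < E)
    (M : ℝ → ℝ) (hM_nonneg : ∀ t, 0 < t → 0 ≤ M t)
    (hM_anti : ∀ a b, 0 < a → a ≤ b → M b ≤ M a)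
    (Minv : ℝ → ℝ≥0∞)
    (hMinv : ∀ y, Minv y
      = sInf {s : ℝ≥0∞ | ∃ t : ℝ, 0 < t ∧ M t ≤ y ∧ s = ENNReal.ofReal t})
    (N : ℝ → ℝ≥0∞) (hN : ∀ y, N y = ENNReal.ofReal y / Minv y)
    (g h : ℝ → X → ℝ)
    (h_dec : ∀ t, 0 < t → MemLp (g t) 2 μ ∧ MemLp (h t) 2 μ ∧
      f =ᵐ[μ] g t + h t ∧ (eLpNorm (g t) ⊤ μ) ^ 2 ≤ ENNReal.ofReal (M t * E))
    (h_meas : Measurable fun t : ℝ => (eLpNorm (h t) 2 μ) ^ 2)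
    (h_int : ∫⁻ t in Ioi (0 : ℝ), (eLpNorm (h t) 2 μ) ^ 2 * ENNReal.ofReal (t⁻¹ ^ 2)
      ≤ ENNReal.ofReal (Real.log 2 * E)) :
    ∫⁻ x, N (‖f x‖ ^ 2 / (4 * E)) ∂μ ≤ ENNReal.ofReal (Real.log 2) := by
  classical
  have hA : AEFinStronglyMeasurable f μ :=
    hf.aefinStronglyMeasurable two_ne_zero ENNReal.ofNat_ne_top
  set S : Set X := hA.sigmaFiniteSet with hSdef
  have hS : MeasurableSet S := hA.measurableSet
  haveI : SigmaFinite (μ.restrict S) := hA.sigmaFinite_restrict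
  set f' : X → ℝ := hf.1.mk f with hf'def
  have hf'm : StronglyMeasurable f' := hf.1.stronglyMeasurable_mk
  have hff' : f =ᵐ[μ] f' := hf.1.ae_eq_mk
  set y : X → ℝ := fun x => ‖f' x‖ ^ 2 / (4 * E) with hy
  have hym : Measurable y := ((hf'm.measurable.norm).pow_const 2).div_const _
  have hMinv_anti : Antitone Minv := by
    intro a b hab
    rw [hMinv, hMinv]
    exact sInf_le_sInf fun s hs => by
      obtain ⟨t, ht, hMt, rfl⟩ := hs
      exact ⟨t, ht, hMt.trans hab, rfl⟩
  have hMinvm : Measurable Minv := hMinv_anti.measurable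
  set F : ℝ → X → ℝ≥0∞ := fun t x =>
    if Minv (y x) < ENNReal.ofReal t
    then ENNReal.ofReal (y x) * ENNReal.ofReal (t⁻¹ ^ 2) else 0 with hFdef
  have hFm : Measurable (Function.uncurry F) := by
    apply Measurable.ite
    · exact measurableSet_lt ((hMinvm.comp hym).comp measurable_snd)
        (ENNReal.measurable_ofReal.comp measurable_fst)
    · exact ((ENNReal.measurable_ofReal.comp (hym.comp measurable_snd))).mul
        (ENNReal.measurable_ofReal.comp (((measurable_inv).pow_const 2).comp measurable_fst))
    · exact measurable_const
  set u : ℝ → ℝ≥0∞ := fun t => (eLpNorm (h t) 2 μ) ^ 2 with hu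
  have hEne : ENNReal.ofReal E ≠ 0 := (ENNReal.ofReal_pos.2 hE).ne'
  have hEinv_ne_top : (ENNReal.ofReal E)⁻¹ ≠ ⊤ := ENNReal.inv_ne_top.2 hEne
  -- Step 1 : pointwise lower bound via the t-integral
  have step1 : ∀ x, N (y x) ≤ ∫⁻ t in Ioi (0:ℝ), F t x := by
    intro x
    rw [hN, div_eq_mul_inv]
    calc ENNReal.ofReal (y x) * (Minv (y x))⁻¹
        ≤ ENNReal.ofReal (y x) * ∫⁻ t in Ioi (0:ℝ),
            (if Minv (y x) < ENNReal.ofReal t then ENNReal.ofReal (t⁻¹ ^ 2) else 0) :=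
          mul_le_mul_right (aux3 _) _
      _ = ∫⁻ t in Ioi (0:ℝ), F t x := by
          rw [← lintegral_const_mul' _ _ ENNReal.ofReal_ne_top]
          exact lintegral_congr fun t => by simp only [hFdef, mul_ite, mul_zero]
  -- Step 2 : for each t > 0, bound the x-integral
  have step2 : ∀ t : ℝ, 0 < t →
      ∫⁻ x, F t x ∂(μ.restrict S) ≤ u t * ((ENNReal.ofReal E)⁻¹ * ENNReal.ofReal (t⁻¹ ^ 2)) := by
    intro t ht
    obtain ⟨hgL2, hhL2, hfgh, hgB⟩ := h_dec t ht
    have hgae : ∀ᵐ x ∂μ, ((‖g t x‖₊ : ℝ≥0∞)) ≤ eLpNorm (g t) ⊤ μ := by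
      rw [eLpNorm_exponent_top]
      exact enorm_ae_le_eLpNormEssSup _ _
    have key : ∀ᵐ x ∂(μ.restrict S),
        F t x ≤ ((‖h t x‖₊ : ℝ≥0∞)) ^ 2 * ((ENNReal.ofReal E)⁻¹ * ENNReal.ofReal (t⁻¹ ^ 2)) := by
      filter_upwards [ae_restrict_of_ae hff', ae_restrict_of_ae hfgh,
        ae_restrict_of_ae hgae] with x hx1 hx2 hx3
      by_cases hcond : Minv (y x) < ENNReal.ofReal t
      · simp only [hFdef, if_pos hcond]
        have hex : ∃ s ∈ {s : ℝ≥0∞ | ∃ τ : ℝ, 0 < τ ∧ M τ ≤ y x ∧ s = ENNReal.ofReal τ},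
            s < ENNReal.ofReal t := by
          rw [← sInf_lt_iff, ← hMinv]; exact hcond
        obtain ⟨s, ⟨τ, hτpos, hτle, rfl⟩, hst⟩ := hex
        have hτt : τ ≤ t := ((ENNReal.ofReal_lt_ofReal_iff ht).1 hst).le
        have hMt : M t ≤ y x := (hM_anti τ t hτpos hτt).trans hτle
        have hgsq : ‖g t x‖ ^ 2 ≤ M t * E := by
          have h1 : ((‖g t x‖₊ : ℝ≥0∞)) ^ 2 ≤ ENNReal.ofReal (M t * E) :=
            le_trans (pow_le_pow_left' hx3 2) hgB
          have h2 : ENNReal.ofReal (‖g t x‖ ^ 2) ≤ ENNReal.ofReal (M t * E) := by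
            rwa [ENNReal.ofReal_pow (norm_nonneg _), ofReal_norm, enorm_eq_nnnorm]
          exact (ENNReal.ofReal_le_ofReal_iff (mul_nonneg (hM_nonneg t ht) hE.le)).1 h2
        have hyx : y x ≤ ‖h t x‖ ^ 2 / E := by
          have hfx : f' x = g t x + h t x := by rw [← hx1]; exact hx2
          set a := |f' x| with ha
          set b := |g t x| with hb
          set c := |h t x| with hc
          have ha0 : 0 ≤ a := abs_nonneg _
          have hb0 : 0 ≤ b := abs_nonneg _
          have hc0 : 0 ≤ c := abs_nonneg _
          have habs : a - b ≤ c := by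
            rw [ha, hb, hc, hfx]
            have := abs_sub_abs_le_abs_sub (g t x + h t x) (g t x)
            simpa using this
          have hMt' : 4 * (M t * E) ≤ a ^ 2 := by
            have h1 : M t * (4 * E) ≤ ‖f' x‖ ^ 2 := (le_div_iff₀ (by positivity)).1 hMt
            rw [ha, ← Real.norm_eq_abs]; nlinarith
          have hbsq : b ^ 2 ≤ a ^ 2 / 4 := by
            rw [hb, ← Real.norm_eq_abs]; nlinarith
          have hba : b ≤ a / 2 := by
            rw [show a ^ 2 / 4 = (a / 2) ^ 2 by ring] at hbsq
            have hs := Real.sqrt_le_sqrt hbsq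
            rwa [Real.sqrt_sq hb0, Real.sqrt_sq (by positivity)] at hs
          have hca : a / 2 ≤ c := by linarith
          have hsq : a ^ 2 / 4 ≤ c ^ 2 := by nlinarith
          rw [hy]
          simp only [Real.norm_eq_abs, ← ha, ← hc]
          rw [div_le_div_iff₀ (by positivity) hE]
          nlinarith
        have hofle : ENNReal.ofReal (y x) ≤ ((‖h t x‖₊ : ℝ≥0∞)) ^ 2 * (ENNReal.ofReal E)⁻¹ := by
          calc ENNReal.ofReal (y x) ≤ ENNReal.ofReal (‖h t x‖ ^ 2 / E) :=
                ENNReal.ofReal_le_ofReal hyx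
            _ = ENNReal.ofReal (‖h t x‖ ^ 2) * (ENNReal.ofReal E)⁻¹ := by
                rw [ENNReal.ofReal_div_of_pos hE, div_eq_mul_inv]
            _ = _ := by rw [ENNReal.ofReal_pow (norm_nonneg _), ofReal_norm, enorm_eq_nnnorm]
        calc ENNReal.ofReal (y x) * ENNReal.ofReal (t⁻¹ ^ 2)
            ≤ (((‖h t x‖₊ : ℝ≥0∞)) ^ 2 * (ENNReal.ofReal E)⁻¹) * ENNReal.ofReal (t⁻¹ ^ 2) :=
              mul_le_mul_left hofle _
          _ = _ := by ring
      · simp only [hFdef, if_neg hcond]; exact zero_le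
    calc ∫⁻ x, F t x ∂(μ.restrict S)
        ≤ ∫⁻ x, ((‖h t x‖₊ : ℝ≥0∞)) ^ 2 * ((ENNReal.ofReal E)⁻¹ * ENNReal.ofReal (t⁻¹ ^ 2))
            ∂(μ.restrict S) := lintegral_mono_ae key
      _ = (∫⁻ x, ((‖h t x‖₊ : ℝ≥0∞)) ^ 2 ∂(μ.restrict S))
            * ((ENNReal.ofReal E)⁻¹ * ENNReal.ofReal (t⁻¹ ^ 2)) :=
          lintegral_mul_const' _ _ (ENNReal.mul_ne_top hEinv_ne_top ENNReal.ofReal_ne_top)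
      _ ≤ (∫⁻ x, ((‖h t x‖₊ : ℝ≥0∞)) ^ 2 ∂μ)
            * ((ENNReal.ofReal E)⁻¹ * ENNReal.ofReal (t⁻¹ ^ 2)) :=
          mul_le_mul_left (setLIntegral_le_lintegral _ _) _
      _ = u t * ((ENNReal.ofReal E)⁻¹ * ENNReal.ofReal (t⁻¹ ^ 2)) := by
          simp only [hu]
          rw [aux4 μ (h t)]
  -- put everything together
  have hN0 : N 0 = 0 := by rw [hN]; simp
  have hzero : ∫⁻ x in Sᶜ, N (‖f x‖ ^ 2 / (4 * E)) ∂μ = 0 := by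
    rw [← lintegral_zero (μ := μ.restrict Sᶜ)]
    refine lintegral_congr_ae ?_
    filter_upwards [hA.ae_eq_zero_compl] with x hx
    have : f x = 0 := hx
    rw [this]
    simpa using hN0
  have hcongr : ∫⁻ x, N (‖f x‖ ^ 2 / (4 * E)) ∂μ = ∫⁻ x, N (y x) ∂(μ.restrict S) := by
    rw [← lintegral_add_compl (fun x => N (‖f x‖ ^ 2 / (4 * E))) hS, hzero, add_zero]
    refine lintegral_congr_ae ?_
    filter_upwards [ae_restrict_of_ae hff'] with x hx
    rw [hy]; simp only [hx]
  rw [hcongr]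
  calc ∫⁻ x, N (y x) ∂(μ.restrict S)
      ≤ ∫⁻ x, (∫⁻ t in Ioi (0:ℝ), F t x) ∂(μ.restrict S) := lintegral_mono step1
    _ = ∫⁻ t in Ioi (0:ℝ), ∫⁻ x, F t x ∂(μ.restrict S) := by
        have hswap : ∫⁻ t in Ioi (0:ℝ), (∫⁻ x, F t x ∂(μ.restrict S))
            = ∫⁻ x, (∫⁻ t in Ioi (0:ℝ), F t x) ∂(μ.restrict S) :=
          lintegral_lintegral_swap hFm.aemeasurable
        exact hswap.symm
    _ ≤ ∫⁻ t in Ioi (0:ℝ), u t * ((ENNReal.ofReal E)⁻¹ * ENNReal.ofReal (t⁻¹ ^ 2)) := by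
        refine lintegral_mono_ae ?_
        filter_upwards [ae_restrict_mem measurableSet_Ioi] with t ht
        exact step2 t ht
    _ = (∫⁻ t in Ioi (0:ℝ), u t * ENNReal.ofReal (t⁻¹ ^ 2)) * (ENNReal.ofReal E)⁻¹ := by
        rw [← lintegral_mul_const' _ _ hEinv_ne_top]
        exact lintegral_congr fun t => by ring
    _ ≤ ENNReal.ofReal (Real.log 2 * E) * (ENNReal.ofReal E)⁻¹ := mul_le_mul_left h_int _
    _ = ENNReal.ofReal (Real.log 2) := by
        rw [ENNReal.ofReal_mul (Real.log_nonneg one_le_two), mul_assoc,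
          ENNReal.mul_inv_cancel hEne ENNReal.ofReal_ne_top, mul_one]
end

section
/- Let (X, μ) be a measure space, let f ∈ L¹(X, μ) ∩ L²(X, μ) be nonzero, and let E > 0. Let F : (0,∞) → [0,∞) be nondecreasing, and define F⁻¹(y) := sup{λ > 0 : F(λ) ≤ y} ∈ [0,∞] (with sup ∅ = 0). Suppose that for every λ > 0 there exist g_λ, h_λ ∈ L²(X, μ) with f = g_λ + h_λ almost everywhere, ‖g_λ‖_{L^∞} ≤ F(λ) · ‖f‖_{L¹}, and that λ ↦ ‖h_λ‖_{L²}² is measurable with ∫₀^∞ ‖h_λ‖_{L²}² dλ ≤ E. Then ∫_X |f(x)|² · F⁻¹(|f(x)| / (2‖f‖_{L¹})) dμ(x) ≤ 4E (the integral taken in the extended sense). -/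
open MeasureTheory Set ENNReal

/-- Lebesgue measure of `{l > 0 | ofReal l < t}` is `t`. -/
lemma aux_volume_lt (t : ℝ≥0∞) :
    (MeasureTheory.volume {l : ℝ | 0 < l ∧ ENNReal.ofReal l < t}) = t := by
  rcases eq_or_ne t ⊤ with rfl | ht
  · have : {l : ℝ | 0 < l ∧ ENNReal.ofReal l < ⊤} = Ioi (0 : ℝ) := by
      ext l; simp [ofReal_lt_top]
    rw [this]; simp [Real.volume_Ioi]
  · have : {l : ℝ | 0 < l ∧ ENNReal.ofReal l < t} = Ioo 0 t.toReal := by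
      ext l
      constructor
      · rintro ⟨hl, hlt⟩
        exact ⟨hl, (ENNReal.ofReal_lt_iff_lt_toReal hl.le ht).mp hlt⟩
      · rintro ⟨hl, hlt⟩
        exact ⟨hl, (ENNReal.ofReal_lt_iff_lt_toReal hl.le ht).mpr hlt⟩
    rw [this, Real.volume_Ioo, sub_zero, ENNReal.ofReal_toReal ht]

/-- analytic core of the first inequality of Theorem 1.3.
Given a spectral-type decomposition `f = g λ + h λ` with `‖g λ‖_∞ ≤ F(λ)·‖f‖₁` and
`∫₀^∞ ‖h λ‖₂² dλ ≤ E`, one has `∫_X |f|² F⁻¹(|f|/(2‖f‖₁)) dμ ≤ 4E`, where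
`F⁻¹(y) = sup {λ > 0 | F λ ≤ y}` (computed in `[0,∞]`, with `sup ∅ = 0`). -/
theorem stmt_2 {X : Type*} [MeasurableSpace X] (μ : Measure X)
    (f : X → ℝ) (hf1 : MemLp f 1 μ) (hf2 : MemLp f 2 μ) (hf_ne : ¬ f =ᵐ[μ] 0)
    (E : ℝ) (hE : 0 < E)
    (F : ℝ → ℝ) (hF_nonneg : ∀ l, 0 < l → 0 ≤ F l)
    (hF_mono : ∀ a b, 0 < a → a ≤ b → F a ≤ F b)
    (Finv : ℝ → ℝ≥0∞)
    (hFinv : ∀ y, Finv y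
      = sSup {t : ℝ≥0∞ | ∃ l : ℝ, 0 < l ∧ F l ≤ y ∧ t = ENNReal.ofReal l})
    (g h : ℝ → X → ℝ)
    (h_dec : ∀ l, 0 < l → MemLp (g l) 2 μ ∧ MemLp (h l) 2 μ ∧
      f =ᵐ[μ] g l + h l ∧
      eLpNorm (g l) ⊤ μ ≤ ENNReal.ofReal (F l) * eLpNorm f 1 μ)
    (h_meas : Measurable fun l : ℝ => (eLpNorm (h l) 2 μ) ^ 2)
    (h_int : ∫⁻ l in Ioi (0 : ℝ), (eLpNorm (h l) 2 μ) ^ 2 ≤ ENNReal.ofReal E) :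
    ∫⁻ x, ENNReal.ofReal (‖f x‖ ^ 2)
        * Finv (‖f x‖ / (2 * (eLpNorm f 1 μ).toReal)) ∂μ
      ≤ ENNReal.ofReal (4 * E) := by
  classical
  set N : ℝ≥0∞ := eLpNorm f 1 μ with hN
  have hNlt : N < ⊤ := hf1.2
  have hNne : N ≠ 0 := by
    intro h0
    exact hf_ne ((eLpNorm_eq_zero_iff hf1.1 one_ne_zero).mp h0)
  have hNpos : 0 < N.toReal := ENNReal.toReal_pos hNne hNlt.ne
  -- measurable representative of f
  obtain ⟨f', hf'sm, hff'⟩ := hf1.1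
  have hf'meas : Measurable f' := hf'sm.measurable
  set c : X → ℝ≥0∞ := fun x => ENNReal.ofReal (‖f' x‖ ^ 2) with hc
  set s : X → ℝ≥0∞ := fun x => Finv (‖f' x‖ / (2 * N.toReal)) with hs
  have hFinv_mono : Monotone Finv := by
    intro a b hab
    rw [hFinv, hFinv]
    exact sSup_le_sSup (fun t ⟨l, hl, hFl, ht⟩ => ⟨l, hl, hFl.trans hab, ht⟩)
  have hc_meas : Measurable c :=
    ENNReal.measurable_ofReal.comp ((hf'meas.norm).pow measurable_const)
  have hs_meas : Measurable s :=
    hFinv_mono.measurable.comp ((hf'meas.norm).div measurable_const)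
  -- key: if `ofReal l < s x` then `F l * N.toReal ≤ ‖f' x‖ / 2`
  have hkey : ∀ (x : X) (l : ℝ), 0 < l → ENNReal.ofReal l < s x →
      F l * N.toReal ≤ ‖f' x‖ / 2 := by
    intro x l hl hlt
    rw [hs] at hlt
    simp only [hFinv] at hlt
    obtain ⟨t, ⟨l', hl', hFl', rfl⟩, hlt'⟩ := lt_sSup_iff.mp hlt
    have hll' : l < l' := by
      have := (ENNReal.ofReal_lt_ofReal_iff_of_nonneg hl.le).mp hlt'
      exact this
    have hFle : F l ≤ ‖f' x‖ / (2 * N.toReal) :=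
      (hF_mono l l' hl hll'.le).trans hFl'
    have := mul_le_mul_of_nonneg_right hFle hNpos.le
    calc F l * N.toReal ≤ ‖f' x‖ / (2 * N.toReal) * N.toReal := this
      _ = ‖f' x‖ / 2 := by field_simp
  -- the sigma-finite set
  have hafm : AEFinStronglyMeasurable f μ :=
    hf1.aefinStronglyMeasurable one_ne_zero one_ne_top
  set T : Set X := hafm.sigmaFiniteSet with hT
  have hTmeas : MeasurableSet T := hafm.measurableSet
  haveI : SigmaFinite (μ.restrict T) := hafm.sigmaFinite_restrict
  set ν : Measure ℝ := volume.restrict (Ioi (0 : ℝ)) with hν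
  -- the product integrand
  set G : ℝ → X → ℝ≥0∞ := fun l x =>
    if ENNReal.ofReal l < s x then c x / 4 else 0 with hG
  have hG_meas : Measurable (Function.uncurry G) := by
    apply Measurable.ite
    · exact measurableSet_lt (ENNReal.measurable_ofReal.comp measurable_fst)
        (hs_meas.comp measurable_snd)
    · exact (hc_meas.comp measurable_snd).div measurable_const
    · exact measurable_const
  -- Step A: for each l > 0, ∫⁻ x, G l x ∂(μ.restrict T) ≤ ‖h l‖₂²
  have stepA : ∀ l : ℝ, 0 < l →
      ∫⁻ x, G l x ∂(μ.restrict T) ≤ (eLpNorm (h l) 2 μ) ^ 2 := by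
    intro l hl
    obtain ⟨hg2, hh2, hfe, hgtop⟩ := h_dec l hl
    have hgb : ∀ᵐ x ∂μ, ‖g l x‖ ≤ F l * N.toReal := by
      have h1 : ∀ᵐ x ∂μ, (‖g l x‖₊ : ℝ≥0∞) ≤ eLpNormEssSup (g l) μ :=
        ae_le_eLpNormEssSup
      filter_upwards [h1] with x hx
      have hx2 : (‖g l x‖₊ : ℝ≥0∞) ≤ ENNReal.ofReal (F l) * N := by
        calc (‖g l x‖₊ : ℝ≥0∞) ≤ eLpNormEssSup (g l) μ := hx
          _ = eLpNorm (g l) ⊤ μ := eLpNorm_exponent_top.symm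
          _ ≤ ENNReal.ofReal (F l) * N := hgtop
      have hfin : ENNReal.ofReal (F l) * N ≠ ⊤ :=
        ENNReal.mul_ne_top ofReal_ne_top hNlt.ne
      have := ENNReal.toReal_mono hfin hx2
      rw [ENNReal.coe_toReal, coe_nnnorm] at this
      rwa [ENNReal.toReal_mul, ENNReal.toReal_ofReal (hF_nonneg l hl)] at this
    have hpt : ∀ᵐ x ∂μ, G l x ≤ ENNReal.ofReal (‖h l x‖ ^ 2) := by
      filter_upwards [hgb, hfe, hff'] with x hgx hfx hfx'
      rw [hG]
      by_cases hx : ENNReal.ofReal l < s x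
      · simp only [hx, if_true]
        have h1 : F l * N.toReal ≤ ‖f' x‖ / 2 := hkey x l hl hx
        have h2 : ‖f' x‖ / 2 ≤ ‖h l x‖ := by
          have hfgh : f x = g l x + h l x := hfx
          have : ‖f x‖ - ‖g l x‖ ≤ ‖h l x‖ := by
            calc ‖f x‖ - ‖g l x‖ ≤ ‖f x - g l x‖ := norm_sub_norm_le _ _
              _ = ‖h l x‖ := by rw [hfgh]; ring_nf
          have : ‖f' x‖ - (F l * N.toReal) ≤ ‖h l x‖ := by
            rw [← hfx'] at *
            linarith
          linarith
        have hnn : (0:ℝ) ≤ ‖f' x‖ / 2 := by positivity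
        calc c x / 4 = ENNReal.ofReal (‖f' x‖ ^ 2 / 4) := by
              rw [hc]
              rw [ENNReal.ofReal_div_of_pos (by norm_num)]
              norm_num
          _ = ENNReal.ofReal ((‖f' x‖ / 2) ^ 2) := by ring_nf
          _ ≤ ENNReal.ofReal (‖h l x‖ ^ 2) :=
              ENNReal.ofReal_le_ofReal (by
                have := pow_le_pow_left₀ hnn h2 2
                simpa using this)
      · simp [hx]
    have hmono : ∫⁻ x, G l x ∂(μ.restrict T) ≤ ∫⁻ x, ENNReal.ofReal (‖h l x‖ ^ 2) ∂μ := by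
      calc ∫⁻ x, G l x ∂(μ.restrict T)
          ≤ ∫⁻ x, ENNReal.ofReal (‖h l x‖ ^ 2) ∂(μ.restrict T) :=
            lintegral_mono_ae (ae_restrict_of_ae hpt)
        _ ≤ ∫⁻ x, ENNReal.ofReal (‖h l x‖ ^ 2) ∂μ :=
            lintegral_mono' Measure.restrict_le_self le_rfl
    refine hmono.trans (le_of_eq ?_)
    have h2 : (eLpNorm (h l) 2 μ) ^ 2 = ∫⁻ x, (‖h l x‖₊ : ℝ≥0∞) ^ (2:ℝ) ∂μ := by
      rw [eLpNorm_eq_lintegral_rpow_enorm_toReal (by norm_num) (by norm_num)]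
      rw [← ENNReal.rpow_natCast _ 2, ← ENNReal.rpow_mul]
      norm_num
      simp only [enorm_eq_nnnorm]
    rw [h2]
    refine lintegral_congr fun x => ?_
    rw [show (2:ℝ) = ((2:ℕ):ℝ) by norm_num, ENNReal.rpow_natCast,
      ← enorm_eq_nnnorm, ← ofReal_norm_eq_enorm, ← ENNReal.ofReal_pow (norm_nonneg _)]
  -- Step B: Tonelli
  have swap : ∫⁻ l, ∫⁻ x, G l x ∂(μ.restrict T) ∂ν
      = ∫⁻ x, ∫⁻ l, G l x ∂ν ∂(μ.restrict T) := by
    exact lintegral_lintegral_swap (hG_meas.aemeasurable)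
  -- inner integral over l
  have hinner : ∀ x : X, ∫⁻ l, G l x ∂ν = c x / 4 * s x := by
    intro x
    have hset : MeasurableSet {l : ℝ | ENNReal.ofReal l < s x} :=
      measurableSet_lt ENNReal.measurable_ofReal measurable_const
    have : ∫⁻ l, G l x ∂ν
        = ∫⁻ l, ({l : ℝ | ENNReal.ofReal l < s x}).indicator (fun _ => c x / 4) l ∂ν := by
      refine lintegral_congr fun l => ?_
      rw [hG, Set.indicator_apply]
      rfl
    rw [this, lintegral_indicator hset _, hν, setLIntegral_const, Measure.restrict_apply hset]
    have : {l : ℝ | ENNReal.ofReal l < s x} ∩ Ioi 0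
        = {l : ℝ | 0 < l ∧ ENNReal.ofReal l < s x} := by
      ext l; simp [and_comm]
    rw [this, aux_volume_lt, mul_comm]
  -- combine
  have hB : ∫⁻ x, c x / 4 * s x ∂(μ.restrict T) ≤ ENNReal.ofReal E := by
    rw [← lintegral_congr hinner, ← swap]
    calc ∫⁻ l, ∫⁻ x, G l x ∂(μ.restrict T) ∂ν
        ≤ ∫⁻ l in Ioi (0:ℝ), (eLpNorm (h l) 2 μ) ^ 2 := by
          rw [hν]
          refine lintegral_mono_ae ?_
          rw [ae_restrict_iff' measurableSet_Ioi]
          exact Filter.Eventually.of_forall fun l hl => stepA l hl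
      _ ≤ ENNReal.ofReal E := h_int
  have hB4 : ∫⁻ x, c x * s x ∂(μ.restrict T) ≤ ENNReal.ofReal (4 * E) := by
    have heq : ∀ x, c x / 4 * s x = 4⁻¹ * (c x * s x) := by
      intro x
      rw [ENNReal.div_eq_inv_mul]
      ring
    rw [lintegral_congr heq, lintegral_const_mul' 4⁻¹ _ (by norm_num)] at hB
    have h4 : (4 : ℝ≥0∞) ≠ 0 := by norm_num
    have h4' : (4 : ℝ≥0∞) ≠ ⊤ := by norm_num
    calc ∫⁻ x, c x * s x ∂(μ.restrict T)
        = 4 * (4⁻¹ * ∫⁻ x, c x * s x ∂(μ.restrict T)) := by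
          rw [← mul_assoc, ENNReal.mul_inv_cancel h4 h4', one_mul]
      _ ≤ 4 * ENNReal.ofReal E := mul_le_mul_right hB 4
      _ = ENNReal.ofReal (4 * E) := by
          rw [ENNReal.ofReal_mul (by norm_num)]
          norm_num
  -- transfer from μ.restrict T to μ
  have hzero : ∫⁻ x, c x * s x ∂(μ.restrict Tᶜ) = 0 := by
    have hfz : f =ᵐ[μ.restrict Tᶜ] 0 := hafm.ae_eq_zero_compl
    have hfz' : f' =ᵐ[μ.restrict Tᶜ] 0 :=
      Filter.EventuallyEq.trans (ae_restrict_of_ae hff'.symm) hfz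
    refine lintegral_eq_zero_iff' ((hc_meas.mul hs_meas).aemeasurable) |>.mpr ?_
    filter_upwards [hfz'] with x hx
    simp only [hc, Pi.zero_apply, Pi.mul_apply] at hx ⊢
    rw [hx]
    simp
  have hsplit : ∫⁻ x, c x * s x ∂μ
      = ∫⁻ x, c x * s x ∂(μ.restrict T) + ∫⁻ x, c x * s x ∂(μ.restrict Tᶜ) := by
    rw [← lintegral_add_compl (fun x => c x * s x) hTmeas]
  have hfinal : ∫⁻ x, c x * s x ∂μ ≤ ENNReal.ofReal (4 * E) := by
    rw [hsplit, hzero, add_zero]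
    exact hB4
  -- conclude: the original integrand agrees a.e. with c * s
  have hcongr : ∫⁻ x, ENNReal.ofReal (‖f x‖ ^ 2)
      * Finv (‖f x‖ / (2 * (eLpNorm f 1 μ).toReal)) ∂μ = ∫⁻ x, c x * s x ∂μ := by
    refine lintegral_congr_ae ?_
    filter_upwards [hff'] with x hx
    rw [hc, hs, ← hN, hx]
  rw [hcongr]
  exact hfinal
end

section
/- Let (X, μ) be a measure space, let f ∈ L¹(X, μ) ∩ L²(X, μ) be nonzero, and let E > 0. Let F : (0,∞) → [0,∞) be nondecreasing, and define F⁻¹(y) := sup{λ > 0 : F(λ) ≤ y} ∈ [0,∞] (with sup ∅ = 0). Assume that ∫_X |f(x)|² · F⁻¹(|f(x)| / (2‖f‖_{L¹})) dμ(x) ≤ 4E. Let φ : [0,∞) → [0,∞) be convex with φ(y) ≤ y · F⁻¹(y) for all y ≥ 0. Then ‖f‖_{L¹}² · φ(‖f‖_{L²}² / (2‖f‖_{L¹}²)) ≤ 2E. -/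
open MeasureTheory Set ENNReal Filter

/-- Supporting line for a convex function on `Ici 0` at an interior point. -/
lemma supp_line {φ : ℝ → ℝ} (hφ : ConvexOn ℝ (Ici 0) φ) {m : ℝ} (hm : 0 < m) :
    ∃ c : ℝ, ∀ y, 0 ≤ y → φ m + c * (y - m) ≤ φ y := by
  set S : Set ℝ := (fun y => (φ m - φ y) / (m - y)) '' (Ico 0 m) with hS
  have hne : S.Nonempty := ⟨_, ⟨0, ⟨le_rfl, hm⟩, rfl⟩⟩
  have hub : ∀ z, m < z → (φ z - φ m) / (z - m) ∈ upperBounds S := by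
    rintro z hz _ ⟨a, ⟨ha0, ham⟩, rfl⟩
    have key := hφ.secant_mono (a := m) (x := a) (y := z) (le_of_lt hm)
      ha0 (le_of_lt (hm.trans hz)) (ne_of_lt ham) (ne_of_gt hz) (le_of_lt (ham.trans hz))
    have heq : (φ m - φ a) / (m - a) = (φ a - φ m) / (a - m) := by
      rw [← neg_div_neg_eq]; congr 1 <;> ring
    simpa [heq] using key
  have hbdd : BddAbove S := ⟨_, hub (m + 1) (by linarith)⟩
  refine ⟨sSup S, fun y hy => ?_⟩
  rcases lt_trichotomy y m with h | h | h
  · have hle : (φ m - φ y) / (m - y) ≤ sSup S := le_csSup hbdd ⟨y, ⟨hy, h⟩, rfl⟩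
    have hmy : 0 < m - y := by linarith
    rw [div_le_iff₀ hmy] at hle
    nlinarith
  · simp [h]
  · have hle : sSup S ≤ (φ y - φ m) / (y - m) := csSup_le hne (hub y h)
    have hym : 0 < y - m := by linarith
    rw [le_div_iff₀ hym] at hle
    linarith

/-- Nash-type inequality, second part of Theorem 1.3.
From `∫_X |f|² F⁻¹(|f|/(2‖f‖₁)) dμ ≤ 4E` and a convex `φ : [0,∞) → [0,∞)` with
`φ(y) ≤ y·F⁻¹(y)`, one deduces `‖f‖₁² φ(‖f‖₂²/(2‖f‖₁²)) ≤ 2E`. Here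
`F⁻¹(y) = sup {λ > 0 | F λ ≤ y}` (in `[0,∞]`, `sup ∅ = 0`). -/
theorem stmt_3 {X : Type*} [MeasurableSpace X] (μ : Measure X)
    (f : X → ℝ) (hf1 : MemLp f 1 μ) (hf2 : MemLp f 2 μ) (hf_ne : ¬ f =ᵐ[μ] 0)
    (E : ℝ) (hE : 0 < E)
    (F : ℝ → ℝ) (hF_nonneg : ∀ l, 0 < l → 0 ≤ F l)
    (hF_mono : ∀ a b, 0 < a → a ≤ b → F a ≤ F b)
    (Finv : ℝ → ℝ≥0∞)
    (hFinv : ∀ y, Finv y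
      = sSup {t : ℝ≥0∞ | ∃ l : ℝ, 0 < l ∧ F l ≤ y ∧ t = ENNReal.ofReal l})
    (h_sob : ∫⁻ x, ENNReal.ofReal (‖f x‖ ^ 2)
        * Finv (‖f x‖ / (2 * (eLpNorm f 1 μ).toReal)) ∂μ
      ≤ ENNReal.ofReal (4 * E))
    (φ : ℝ → ℝ) (hφ_conv : ConvexOn ℝ (Ici 0) φ)
    (hφ_nonneg : ∀ y, 0 ≤ y → 0 ≤ φ y)
    (hφ_le : ∀ y, 0 ≤ y → ENNReal.ofReal (φ y) ≤ ENNReal.ofReal y * Finv y) :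
    (eLpNorm f 1 μ).toReal ^ 2
        * φ ((eLpNorm f 2 μ).toReal ^ 2 / (2 * (eLpNorm f 1 μ).toReal ^ 2))
      ≤ 2 * E := by
  set N1 := (eLpNorm f 1 μ).toReal with hN1def
  set N2 := (eLpNorm f 2 μ).toReal with hN2def
  have hsn1 : eLpNorm f 1 μ ≠ 0 := by
    rw [Ne, eLpNorm_eq_zero_iff hf1.aestronglyMeasurable one_ne_zero]
    exact hf_ne
  have hsn2 : eLpNorm f 2 μ ≠ 0 := by
    rw [Ne, eLpNorm_eq_zero_iff hf2.aestronglyMeasurable two_ne_zero]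
    exact hf_ne
  have hN1 : 0 < N1 := ENNReal.toReal_pos hsn1 hf1.eLpNorm_ne_top
  have hN2 : 0 < N2 := ENNReal.toReal_pos hsn2 hf2.eLpNorm_ne_top
  -- integral identities
  have hI1 : ∫ x, ‖f x‖ ∂μ = N1 := by
    rw [integral_norm_eq_lintegral_enorm hf1.aestronglyMeasurable, hN1def,
      eLpNorm_one_eq_lintegral_enorm]
  have hI2 : ∫ x, ‖f x‖ ^ 2 ∂μ = N2 ^ 2 := by
    have h := hf2.eLpNorm_eq_integral_rpow_norm two_ne_zero ENNReal.ofNat_ne_top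
    have hint_nonneg : 0 ≤ ∫ x, ‖f x‖ ^ 2 ∂μ :=
      integral_nonneg fun x => by positivity
    have h2 : (2 : ℝ≥0∞).toReal = (2 : ℝ) := by simp
    rw [h2] at h
    have hpow : ∀ x, ‖f x‖ ^ (2 : ℝ) = ‖f x‖ ^ 2 := fun x => by
      rw [show (2:ℝ) = ((2:ℕ):ℝ) by norm_num, Real.rpow_natCast]
    simp only [hpow] at h
    rw [hN2def, h, ENNReal.toReal_ofReal (by positivity),
      show ((2:ℝ))⁻¹ = ((2:ℕ):ℝ)⁻¹ by norm_num,
      Real.rpow_inv_natCast_pow hint_nonneg two_ne_zero]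
  set m : ℝ := N2 ^ 2 / (2 * N1 ^ 2) with hmdef
  have hm : 0 < m := by positivity
  -- φ(0) = 0
  have hφ0 : φ 0 = 0 := by
    have h1 := hφ_le 0 le_rfl
    simp only [ENNReal.ofReal_zero, zero_mul, nonpos_iff_eq_zero, ENNReal.ofReal_eq_zero] at h1
    exact le_antisymm h1 (hφ_nonneg 0 le_rfl)
  -- continuity of φ on Ici 0
  have hφ_cont : ContinuousOn φ (Ici 0) := by
    intro x hx
    rcases eq_or_lt_of_le (mem_Ici.mp hx) with h | h
    · subst h
      have h0 : Tendsto φ (nhdsWithin 0 (Ici 0)) (nhds 0) := by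
        apply squeeze_zero'
        · exact eventually_mem_nhdsWithin.mono fun y hy => hφ_nonneg y hy
        · have h1 : ∀ᶠ y in nhdsWithin (0:ℝ) (Ici 0), y < 1 :=
            eventually_nhdsWithin_of_eventually_nhds (Filter.Tendsto.eventually_lt_const one_pos tendsto_id)
          filter_upwards [eventually_mem_nhdsWithin, h1] with y hy hy1
          have hc := hφ_conv.2 (mem_Ici.2 (zero_le_one (α := ℝ))) (mem_Ici.2 (le_refl (0:ℝ)))
            (hy : (0:ℝ) ≤ y) (by linarith : (0:ℝ) ≤ 1 - y) (by ring : y + (1 - y) = 1)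
          simp only [smul_eq_mul, mul_one, mul_zero, add_zero, hφ0, mul_zero] at hc
          convert hc using 2
        · have : Tendsto (fun y : ℝ => y * φ 1) (nhdsWithin 0 (Ici 0)) (nhds (0 * φ 1)) :=
            (tendsto_id.mul tendsto_const_nhds).mono_left nhdsWithin_le_nhds
          simpa using this
      unfold ContinuousWithinAt
      rwa [hφ0]
    · have hconv' : ConvexOn ℝ (Ioi 0) φ :=
        hφ_conv.subset Ioi_subset_Ici_self (convex_Ioi 0)
      have hcont : ContinuousOn φ (Ioi 0) := hconv'.continuousOn isOpen_Ioi
      exact (hcont.continuousAt (Ioi_mem_nhds h)).continuousWithinAt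
  -- measurability
  have hfa := hf1.aestronglyMeasurable
  have hg_nonneg : ∀ x, 0 ≤ ‖f x‖ / (2 * N1) := fun x => by positivity
  have hg_meas : AEStronglyMeasurable (fun x => ‖f x‖ / (2 * N1)) μ :=
    by simpa [div_eq_mul_inv] using (hfa.norm.mul aestronglyMeasurable_const :
      AEStronglyMeasurable (fun x => ‖f x‖ * (2 * N1)⁻¹) μ).congr
        (Eventually.of_forall fun x => by simp [div_eq_mul_inv])
  have hψ_cont : Continuous (fun y : ℝ => φ (max y 0)) :=
    hφ_cont.comp_continuous (continuous_id.max continuous_const)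
      (fun y => mem_Ici.2 (le_max_right _ _))
  have hφg_meas : AEStronglyMeasurable (fun x => φ (‖f x‖ / (2 * N1))) μ := by
    have h := hψ_cont.comp_aestronglyMeasurable hg_meas
    refine h.congr (Eventually.of_forall fun x => ?_)
    simp only [Function.comp, max_eq_left (hg_nonneg x)]
  set G : X → ℝ := fun x => ‖f x‖ * φ (‖f x‖ / (2 * N1)) with hGdef
  have hG_nonneg : ∀ x, 0 ≤ G x := fun x =>
    mul_nonneg (norm_nonneg _) (hφ_nonneg _ (hg_nonneg x))
  have hG_meas : AEStronglyMeasurable G μ := hfa.norm.mul hφg_meas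
  -- lintegral bound
  have hlin : ∫⁻ x, ENNReal.ofReal (G x) ∂μ ≤ ENNReal.ofReal (2 * E / N1) := by
    have step1 : ∀ x, ENNReal.ofReal (G x)
        ≤ ENNReal.ofReal (1 / (2 * N1))
          * (ENNReal.ofReal (‖f x‖ ^ 2) * Finv (‖f x‖ / (2 * N1))) := by
      intro x
      rw [hGdef]
      simp only
      rw [ENNReal.ofReal_mul (norm_nonneg _)]
      calc ENNReal.ofReal ‖f x‖ * ENNReal.ofReal (φ (‖f x‖ / (2 * N1)))
          ≤ ENNReal.ofReal ‖f x‖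
            * (ENNReal.ofReal (‖f x‖ / (2 * N1)) * Finv (‖f x‖ / (2 * N1))) :=
            mul_le_mul_right (hφ_le _ (hg_nonneg x)) _
        _ = ENNReal.ofReal (1 / (2 * N1))
            * (ENNReal.ofReal (‖f x‖ ^ 2) * Finv (‖f x‖ / (2 * N1))) := by
            rw [← mul_assoc, ← ENNReal.ofReal_mul (norm_nonneg _),
              show ‖f x‖ * (‖f x‖ / (2 * N1)) = 1 / (2 * N1) * ‖f x‖ ^ 2 by
                field_simp,
              ENNReal.ofReal_mul (by positivity), mul_assoc]
    calc ∫⁻ x, ENNReal.ofReal (G x) ∂μ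
        ≤ ∫⁻ x, ENNReal.ofReal (1 / (2 * N1))
            * (ENNReal.ofReal (‖f x‖ ^ 2) * Finv (‖f x‖ / (2 * N1))) ∂μ :=
          lintegral_mono step1
      _ = ENNReal.ofReal (1 / (2 * N1))
            * ∫⁻ x, ENNReal.ofReal (‖f x‖ ^ 2) * Finv (‖f x‖ / (2 * N1)) ∂μ :=
          lintegral_const_mul' _ _ ENNReal.ofReal_ne_top
      _ ≤ ENNReal.ofReal (1 / (2 * N1)) * ENNReal.ofReal (4 * E) :=
          mul_le_mul_right h_sob _
      _ = ENNReal.ofReal (2 * E / N1) := by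
          rw [← ENNReal.ofReal_mul (by positivity)]
          congr 1
          field_simp
          ring
  -- integrability of G
  have hG_int : Integrable G μ := by
    refine ⟨hG_meas, ?_⟩
    rw [hasFiniteIntegral_iff_norm]
    have heq : ∀ x, ENNReal.ofReal ‖G x‖ = ENNReal.ofReal (G x) := fun x => by
      rw [Real.norm_of_nonneg (hG_nonneg x)]
    simp only [heq]
    exact lt_of_le_of_lt hlin ENNReal.ofReal_lt_top
  have hG_le : ∫ x, G x ∂μ ≤ 2 * E / N1 := by
    rw [integral_eq_lintegral_of_nonneg_ae (Eventually.of_forall hG_nonneg) hG_meas]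
    have h := ENNReal.toReal_mono ENNReal.ofReal_ne_top hlin
    rwa [ENNReal.toReal_ofReal (by positivity)] at h
  -- Jensen via supporting line
  obtain ⟨c, hc⟩ := supp_line hφ_conv hm
  have hint_norm : Integrable (fun x => ‖f x‖) μ :=
    ((memLp_one_iff_integrable).1 hf1).norm
  have hint_sq : Integrable (fun x => ‖f x‖ ^ 2) μ := by
    refine (hf2.integrable_norm_rpow two_ne_zero ENNReal.ofNat_ne_top).congr
      (Eventually.of_forall fun x => ?_)
    norm_num [Real.rpow_natCast]
  have hlow : N1 * φ m ≤ ∫ x, G x ∂μ := by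
    have hpt : ∀ x, ‖f x‖ * (φ m + c * (‖f x‖ / (2 * N1) - m)) ≤ G x := fun x =>
      mul_le_mul_of_nonneg_left (hc _ (hg_nonneg x)) (norm_nonneg _)
    have heq : (fun x => ‖f x‖ * (φ m + c * (‖f x‖ / (2 * N1) - m)))
        = fun x => (φ m - c * m) * ‖f x‖ + c / (2 * N1) * ‖f x‖ ^ 2 := by
      funext x
      ring
    have hint_lhs : Integrable (fun x => ‖f x‖ * (φ m + c * (‖f x‖ / (2 * N1) - m))) μ := by
      rw [heq]; exact (hint_norm.const_mul _).add (hint_sq.const_mul _)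
    have hmono := integral_mono_ae hint_lhs hG_int (Eventually.of_forall hpt)
    have hcomp : ∫ x, ‖f x‖ * (φ m + c * (‖f x‖ / (2 * N1) - m)) ∂μ = N1 * φ m := by
      rw [heq, integral_add ((hint_norm.const_mul _)) ((hint_sq.const_mul _)),
        integral_const_mul, integral_const_mul, hI1, hI2, hmdef]
      field_simp
      ring
    linarith [hmono, hcomp.symm.le, hcomp.le]
  have hfinal : N1 * φ m ≤ 2 * E / N1 := hlow.trans hG_le
  calc N1 ^ 2 * φ m = N1 * (N1 * φ m) := by ring
    _ ≤ N1 * (2 * E / N1) := mul_le_mul_of_nonneg_left hfinal hN1.le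
    _ = 2 * E := by field_simp
end

section
/- Let (X, μ) be a measure space, let f ∈ L¹(X, μ) ∩ L²(X, μ) be nonzero, and let E > 0. Let φ : [0,∞) → [0,∞) be convex with φ(0) = 0. Suppose the Nash-type inequality ‖f‖_{L¹}² · φ(‖f‖_{L²}² / (2‖f‖_{L¹}²)) ≤ 2E holds, and that f vanishes almost everywhere outside a measurable set Ω ⊆ X with 0 < μ(Ω) < ∞. Then μ(Ω) · φ(1 / (2μ(Ω))) ≤ 2E / ‖f‖_{L²}². -/
open MeasureTheory Set ENNReal

lemma ratio_mono {φ : ℝ → ℝ} (hconv : ConvexOn ℝ (Ici 0) φ) (hz : φ 0 = 0)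
    {y₁ y₂ : ℝ} (h1 : 0 < y₁) (h12 : y₁ ≤ y₂) : φ y₁ * y₂ ≤ φ y₂ * y₁ := by
  have hy₂ : 0 < y₂ := lt_of_lt_of_le h1 h12
  set t := y₁ / y₂ with ht
  have ht0 : 0 ≤ t := by positivity
  have ht1 : t ≤ 1 := by rw [ht, div_le_one hy₂]; exact h12
  have key := hconv.2 (mem_Ici.2 le_rfl) (mem_Ici.2 hy₂.le)
    (sub_nonneg.2 ht1) ht0 (by ring)
  simp only [smul_eq_mul, mul_zero, zero_add, hz] at key
  have hty : t * y₂ = y₁ := by rw [ht, div_mul_cancel₀ _ hy₂.ne']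
  rw [hty] at key
  have : φ y₁ * y₂ ≤ (t * φ y₂) * y₂ := by nlinarith
  calc φ y₁ * y₂ ≤ (t * φ y₂) * y₂ := this
    _ = φ y₂ * y₁ := by rw [← hty]; ring

/-- Faber–Krahn type inequality, third part of Theorem 1.3.
If `f` is supported in a set `Ω` of finite positive measure and the Nash-type
inequality `‖f‖₁² φ(‖f‖₂²/(2‖f‖₁²)) ≤ 2E` holds for a convex `φ : [0,∞) → [0,∞)`
with `φ(0) = 0`, then `μ(Ω) φ(1/(2μ(Ω))) ≤ 2E/‖f‖₂²`. -/
theorem stmt_4 {X : Type*} [MeasurableSpace X] (μ : Measure X)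
    (f : X → ℝ) (hf1 : MemLp f 1 μ) (hf2 : MemLp f 2 μ) (hf_ne : ¬ f =ᵐ[μ] 0)
    (E : ℝ) (hE : 0 < E)
    (φ : ℝ → ℝ) (hφ_conv : ConvexOn ℝ (Ici 0) φ)
    (hφ_nonneg : ∀ y, 0 ≤ y → 0 ≤ φ y) (hφ_zero : φ 0 = 0)
    (h_nash : (eLpNorm f 1 μ).toReal ^ 2
        * φ ((eLpNorm f 2 μ).toReal ^ 2 / (2 * (eLpNorm f 1 μ).toReal ^ 2))
      ≤ 2 * E)
    (Ω : Set X) (hΩ_meas : MeasurableSet Ω) (hΩ_pos : 0 < μ Ω) (hΩ_fin : μ Ω < ⊤)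
    (h_supp : ∀ᵐ x ∂μ, x ∉ Ω → f x = 0) :
    (μ Ω).toReal * φ (1 / (2 * (μ Ω).toReal))
      ≤ 2 * E / (eLpNorm f 2 μ).toReal ^ 2 := by
  set a := (eLpNorm f 1 μ).toReal with ha
  set b := (eLpNorm f 2 μ).toReal with hb
  set m := (μ Ω).toReal with hm
  have hm_pos : 0 < m := ENNReal.toReal_pos hΩ_pos.ne' hΩ_fin.ne
  have ha_pos : 0 < a := ENNReal.toReal_pos
    (by rwa [Ne, eLpNorm_eq_zero_iff hf1.aestronglyMeasurable one_ne_zero])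
    hf1.eLpNorm_ne_top
  have hb_pos : 0 < b := ENNReal.toReal_pos
    (by rwa [Ne, eLpNorm_eq_zero_iff hf2.aestronglyMeasurable two_ne_zero])
    hf2.eLpNorm_ne_top
  -- Cauchy–Schwarz: a² ≤ m * b²
  have hfi : f =ᵐ[μ] Ω.indicator f := by
    filter_upwards [h_supp] with x hx
    by_cases hxΩ : x ∈ Ω
    · simp [hxΩ]
    · simp [hxΩ, hx hxΩ]
  have hCS : eLpNorm f 1 μ ≤ eLpNorm f 2 μ * (μ Ω) ^ (2⁻¹ : ℝ) := by
    have h1 : eLpNorm f 1 μ = eLpNorm f 1 (μ.restrict Ω) := by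
      rw [eLpNorm_congr_ae hfi, eLpNorm_indicator_eq_eLpNorm_restrict hΩ_meas]
    have h2 : eLpNorm f 2 (μ.restrict Ω) ≤ eLpNorm f 2 μ :=
      eLpNorm_mono_measure f Measure.restrict_le_self
    have h3 := eLpNorm_le_eLpNorm_mul_rpow_measure_univ (f := f)
      (μ := μ.restrict Ω) (by norm_num : (1 : ℝ≥0∞) ≤ 2)
      (hf2.aestronglyMeasurable.restrict)
    rw [Measure.restrict_apply_univ] at h3
    have : (1 / (1:ℝ≥0∞).toReal - 1 / (2:ℝ≥0∞).toReal) = (2⁻¹ : ℝ) := by norm_num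
    rw [this] at h3
    calc eLpNorm f 1 μ = eLpNorm f 1 (μ.restrict Ω) := h1
      _ ≤ eLpNorm f 2 (μ.restrict Ω) * μ Ω ^ (2⁻¹ : ℝ) := h3
      _ ≤ eLpNorm f 2 μ * μ Ω ^ (2⁻¹ : ℝ) := by gcongr
  have hCSr : a ≤ b * m ^ (2⁻¹ : ℝ) := by
    have hne : eLpNorm f 2 μ * (μ Ω) ^ (2⁻¹ : ℝ) ≠ ⊤ :=
      ENNReal.mul_ne_top hf2.eLpNorm_ne_top
        (by simp [ENNReal.rpow_ne_top_of_nonneg, hΩ_fin.ne])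
    have := ENNReal.toReal_mono hne hCS
    rwa [ENNReal.toReal_mul, ← ENNReal.toReal_rpow] at this
  have hsq : a ^ 2 ≤ m * b ^ 2 := by
    have h2 : a ^ 2 ≤ (b * m ^ (2⁻¹ : ℝ)) ^ 2 := by
      apply pow_le_pow_left₀ ha_pos.le hCSr
    have hms : (m ^ (2⁻¹ : ℝ)) ^ 2 = m := by
      rw [← Real.rpow_natCast (m ^ (2⁻¹ : ℝ)) 2, ← Real.rpow_mul hm_pos.le]
      norm_num
    calc a ^ 2 ≤ (b * m ^ (2⁻¹ : ℝ)) ^ 2 := h2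
      _ = b ^ 2 * ((m ^ (2⁻¹ : ℝ)) ^ 2) := by ring
      _ = m * b ^ 2 := by rw [hms]; ring
  -- ratio monotonicity
  have h12 : 1 / (2 * m) ≤ b ^ 2 / (2 * a ^ 2) := by
    rw [div_le_div_iff₀ (by positivity) (by positivity)]
    nlinarith
  have R := ratio_mono hφ_conv hφ_zero (by positivity : 0 < 1 / (2 * m)) h12
  have hφc : 0 ≤ φ (b ^ 2 / (2 * a ^ 2)) := hφ_nonneg _ (by positivity)
  rw [le_div_iff₀ (by positivity : (0:ℝ) < b ^ 2)]
  -- m * φ(1/(2m)) * b² ≤ a² * φ(b²/(2a²)) ≤ 2E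
  have key : m * φ (1 / (2 * m)) * b ^ 2 ≤ a ^ 2 * φ (b ^ 2 / (2 * a ^ 2)) := by
    have hmul := mul_le_mul_of_nonneg_left R (by positivity : (0:ℝ) ≤ 2 * m * a ^ 2)
    have e1 : 2 * m * a ^ 2 * (φ (1 / (2 * m)) * (b ^ 2 / (2 * a ^ 2)))
        = m * φ (1 / (2 * m)) * b ^ 2 := by field_simp
    have e2 : 2 * m * a ^ 2 * (φ (b ^ 2 / (2 * a ^ 2)) * (1 / (2 * m)))
        = a ^ 2 * φ (b ^ 2 / (2 * a ^ 2)) := by field_simp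
    rw [e1, e2] at hmul
    exact hmul
  linarith
end

section
/- Let (X, μ) be a measure space, let f ∈ L¹(X, μ) ∩ L²(X, μ) be nonzero, vanishing almost everywhere outside a measurable set Ω ⊆ X with 0 < μ(Ω) < ∞. Let F : (0,∞) → [0,∞) be nondecreasing and right-continuous, define F⁻¹(y) := sup{λ > 0 : F(λ) ≤ y} ∈ [0,∞] (with sup ∅ = 0), and let C ∈ (0,1] and φ : [0,∞) → [0,∞) satisfy φ(y) ≥ C · y · F⁻¹(y) for all y ≥ 0. Let λ₀ > 0 and E > 0 with E ≤ λ₀ ‖f‖_{L²}², and assume the Faber–Krahn inequality μ(Ω) · φ(1/(2μ(Ω))) ≤ 2E / ‖f‖_{L²}² holds. Then 2 μ(Ω) · F(4λ₀ / C) ≥ 1. -/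
open MeasureTheory Set ENNReal Filter Topology

/-- uncertainty principle, inequality (8) of the paper.
If `f ≠ 0` is supported in `Ω` with `0 < μ(Ω) < ∞`, `F` is nondecreasing and
right-continuous on `(0,∞)`, `φ(y) ≥ C·y·F⁻¹(y)` with `C ∈ (0,1]`, the energy
satisfies `E ≤ λ₀‖f‖₂²`, and the Faber–Krahn inequality
`μ(Ω) φ(1/(2μ(Ω))) ≤ 2E/‖f‖₂²` holds, then `2 μ(Ω) F(4λ₀/C) ≥ 1`. Here
`F⁻¹(y) = sup {λ > 0 | F λ ≤ y}` (in `[0,∞]`, `sup ∅ = 0`). -/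
theorem stmt_5 {X : Type*} [MeasurableSpace X] (μ : Measure X)
    (f : X → ℝ) (hf1 : MemLp f 1 μ) (hf2 : MemLp f 2 μ) (hf_ne : ¬ f =ᵐ[μ] 0)
    (Ω : Set X) (hΩ_meas : MeasurableSet Ω) (hΩ_pos : 0 < μ Ω) (hΩ_fin : μ Ω < ⊤)
    (h_supp : ∀ᵐ x ∂μ, x ∉ Ω → f x = 0)
    (F : ℝ → ℝ) (hF_nonneg : ∀ l, 0 < l → 0 ≤ F l)
    (hF_mono : ∀ a b, 0 < a → a ≤ b → F a ≤ F b)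
    (hF_rc : ∀ l, 0 < l → ContinuousWithinAt F (Ici l) l)
    (Finv : ℝ → ℝ≥0∞)
    (hFinv : ∀ y, Finv y
      = sSup {t : ℝ≥0∞ | ∃ l : ℝ, 0 < l ∧ F l ≤ y ∧ t = ENNReal.ofReal l})
    (C : ℝ) (hC : 0 < C) (hC1 : C ≤ 1)
    (φ : ℝ → ℝ) (hφ_nonneg : ∀ y, 0 ≤ y → 0 ≤ φ y)
    (hφ_ge : ∀ y, 0 ≤ y →
      ENNReal.ofReal C * ENNReal.ofReal y * Finv y ≤ ENNReal.ofReal (φ y))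
    (lam0 : ℝ) (hlam0 : 0 < lam0)
    (E : ℝ) (hE : 0 < E) (hE_le : E ≤ lam0 * (eLpNorm f 2 μ).toReal ^ 2)
    (h_fk : (μ Ω).toReal * φ (1 / (2 * (μ Ω).toReal))
      ≤ 2 * E / (eLpNorm f 2 μ).toReal ^ 2) :
    1 ≤ 2 * (μ Ω).toReal * F (4 * lam0 / C) := by
  set m := (μ Ω).toReal with hm_def
  have hm : 0 < m := ENNReal.toReal_pos hΩ_pos.ne' hΩ_fin.ne
  set y := 1 / (2 * m) with hy_def
  have hy : 0 < y := by positivity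
  have hN_ne : eLpNorm f 2 μ ≠ 0 := by
    intro h
    exact hf_ne ((eLpNorm_eq_zero_iff hf2.aestronglyMeasurable (by norm_num)).mp h)
  have hN : 0 < (eLpNorm f 2 μ).toReal :=
    ENNReal.toReal_pos hN_ne hf2.eLpNorm_ne_top
  have hN2 : 0 < (eLpNorm f 2 μ).toReal ^ 2 := by positivity
  have h1 : m * φ y ≤ 2 * lam0 := by
    calc m * φ y ≤ 2 * E / (eLpNorm f 2 μ).toReal ^ 2 := h_fk
    _ ≤ 2 * (lam0 * (eLpNorm f 2 μ).toReal ^ 2) / (eLpNorm f 2 μ).toReal ^ 2 := by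
        gcongr
    _ = 2 * lam0 := by field_simp
  have h2 : φ y ≤ 4 * lam0 * y := by
    have h : m * φ y ≤ m * (4 * lam0 * y) := by
      rw [hy_def, show m * (4 * lam0 * (1 / (2 * m))) = 2 * lam0 by
        field_simp; ring]
      exact h1
    exact le_of_mul_le_mul_left h hm
  set t := 4 * lam0 / C with ht_def
  have ht : 0 < t := by positivity
  have h3 : Finv y ≤ ENNReal.ofReal t := by
    have key : ENNReal.ofReal C * ENNReal.ofReal y * Finv y
        ≤ ENNReal.ofReal C * ENNReal.ofReal y * ENNReal.ofReal t := by
      calc ENNReal.ofReal C * ENNReal.ofReal y * Finv y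
          ≤ ENNReal.ofReal (φ y) := hφ_ge y hy.le
        _ ≤ ENNReal.ofReal (4 * lam0 * y) := ENNReal.ofReal_le_ofReal h2
        _ = ENNReal.ofReal C * ENNReal.ofReal y * ENNReal.ofReal t := by
            rw [← ENNReal.ofReal_mul hC.le, ← ENNReal.ofReal_mul (by positivity)]
            congr 1
            rw [ht_def]; field_simp
    have hfac : ENNReal.ofReal C * ENNReal.ofReal y ≠ 0 := by
      simp [ENNReal.ofReal_eq_zero, not_le, hC, hy, mul_eq_zero]
    have hfac' : ENNReal.ofReal C * ENNReal.ofReal y ≠ ⊤ := by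
      simp [ENNReal.mul_eq_top]
    exact (ENNReal.mul_le_mul_iff_right hfac hfac').mp key
  -- right continuity: F t ≥ y
  have h4 : y ≤ F t := by
    by_contra h
    push_neg at h
    have T : Tendsto F (𝓝[>] t) (𝓝 (F t)) :=
      (hF_rc t ht).mono_left (nhdsWithin_mono t Ioi_subset_Ici_self)
    have hev : ∀ᶠ l in 𝓝[>] t, F l < y := T (Iio_mem_nhds h)
    obtain ⟨l, hlF, hlt⟩ := (hev.and self_mem_nhdsWithin).exists
    have hmem : ENNReal.ofReal l ∈
        {s : ℝ≥0∞ | ∃ l : ℝ, 0 < l ∧ F l ≤ y ∧ s = ENNReal.ofReal l} :=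
      ⟨l, ht.trans hlt, hlF.le, rfl⟩
    have : ENNReal.ofReal l ≤ ENNReal.ofReal t :=
      le_trans (by rw [hFinv y]; exact le_sSup hmem) h3
    rw [ENNReal.ofReal_le_ofReal_iff ht.le] at this
    exact absurd hlt (not_lt.mpr this)
  have : 1 ≤ 2 * m * y := by rw [hy_def]; field_simp; exact le_refl 1
  calc (1:ℝ) ≤ 2 * m * y := this
    _ ≤ 2 * m * F t := by gcongr
end

section
/- Let F : ℝ → ℝ be nondecreasing and right-continuous with F(λ) = 0 for λ ≤ 0, let dF denote the associated Lebesgue–Stieltjes measure, and let ε > 0 and λ > 0. Suppose F(2u) ≥ 2(1+ε) F(u) for all u ∈ (0, λ]. Then, with G(λ) := ∫_{(0,λ]} u⁻¹ dF(u) (taken in [0,∞]), one has F(λ) ≤ λ · G(λ) ≤ (2 + ε⁻¹) · F(λ); in particular G(λ) is finite. -/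
open MeasureTheory Set ENNReal

/-- Proposition 3.1 of the paper. If the nondecreasing
right-continuous `F` (a `StieltjesFunction`) vanishes on `(-∞,0]` and satisfies
the doubling-type condition `F(2u) ≥ 2(1+ε)F(u)` on `(0,λ]`, then, with
`G(λ) = ∫_{(0,λ]} u⁻¹ dF(u)` taken in `[0,∞]`,
`F(λ) ≤ λ·G(λ) ≤ (2+ε⁻¹)·F(λ)`; in particular `G(λ)` is finite. -/
theorem stmt_8 (F : StieltjesFunction ℝ)
    (hF0 : ∀ l : ℝ, l ≤ 0 → F l = 0)
    (ε : ℝ) (hε : 0 < ε) (lam : ℝ) (hlam : 0 < lam)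
    (h_grow : ∀ u ∈ Ioc (0 : ℝ) lam, 2 * (1 + ε) * F u ≤ F (2 * u)) :
    ENNReal.ofReal (F lam)
        ≤ ENNReal.ofReal lam * ∫⁻ u in Ioc (0 : ℝ) lam, ENNReal.ofReal u⁻¹ ∂F.measure
      ∧ ENNReal.ofReal lam * ∫⁻ u in Ioc (0 : ℝ) lam, ENNReal.ofReal u⁻¹ ∂F.measure
        ≤ ENNReal.ofReal ((2 + ε⁻¹) * F lam) := by
  have hF00 : F 0 = 0 := hF0 0 le_rfl
  have hFnonneg : ∀ x : ℝ, 0 ≤ F x := by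
    intro x
    rcases le_or_gt x 0 with h | h
    · exact (hF0 x h).ge
    · calc (0:ℝ) = F 0 := hF00.symm
        _ ≤ F x := F.mono h.le
  set C : ℝ := 2 + ε⁻¹ with hC
  -- key dyadic induction
  have key : ∀ N : ℕ, ∀ μ : ℝ, 0 < μ → μ ≤ lam →
      ∫⁻ u in Ioc (μ / 2 ^ N) μ, ENNReal.ofReal u⁻¹ ∂F.measure
        ≤ ENNReal.ofReal (C * F μ / μ) := by
    intro N
    induction N with
    | zero =>
      intro μ hμ _
      simp [Ioc_self]
    | succ N ih =>
      intro μ hμ hμlam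
      have hμ2 : (0:ℝ) < μ / 2 := by linarith
      have h2N : (2:ℝ) ≤ 2 ^ (N + 1) := by
        calc (2:ℝ) = 2 ^ 1 := by norm_num
          _ ≤ 2 ^ (N + 1) := by
            apply pow_le_pow_right₀ one_le_two
            omega
      have h2 : μ / 2 ^ (N + 1) ≤ μ / 2 := by
        apply div_le_div_of_nonneg_left hμ.le (by norm_num) h2N
      have hsplit : Ioc (μ / 2 ^ (N + 1)) μ = Ioc (μ / 2 ^ (N + 1)) (μ / 2) ∪ Ioc (μ / 2) μ :=
        (Ioc_union_Ioc_eq_Ioc h2 (by linarith)).symm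
      rw [hsplit, lintegral_union measurableSet_Ioc (Ioc_disjoint_Ioc_of_le le_rfl)]
      have h1 : μ / 2 ^ (N + 1) = (μ / 2) / 2 ^ N := by ring
      have hI1 : ∫⁻ u in Ioc (μ / 2 ^ (N + 1)) (μ / 2), ENNReal.ofReal u⁻¹ ∂F.measure
          ≤ ENNReal.ofReal (C * F (μ / 2) / (μ / 2)) := by
        rw [h1]
        exact ih (μ / 2) hμ2 (by linarith)
      have hI2 : ∫⁻ u in Ioc (μ / 2) μ, ENNReal.ofReal u⁻¹ ∂F.measure
          ≤ ENNReal.ofReal (μ / 2)⁻¹ * ENNReal.ofReal (F μ - F (μ / 2)) := by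
        calc ∫⁻ u in Ioc (μ / 2) μ, ENNReal.ofReal u⁻¹ ∂F.measure
            ≤ ∫⁻ _ in Ioc (μ / 2) μ, ENNReal.ofReal (μ / 2)⁻¹ ∂F.measure := by
              apply setLIntegral_mono' measurableSet_Ioc
              intro u hu
              apply ENNReal.ofReal_le_ofReal
              exact inv_anti₀ hμ2 hu.1.le
          _ = ENNReal.ofReal (μ / 2)⁻¹ * F.measure (Ioc (μ / 2) μ) := setLIntegral_const _ _
          _ = ENNReal.ofReal (μ / 2)⁻¹ * ENNReal.ofReal (F μ - F (μ / 2)) := by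
              rw [F.measure_Ioc]
      have hgrow' : 2 * (1 + ε) * F (μ / 2) ≤ F μ := by
        have := h_grow (μ / 2) ⟨hμ2, by linarith⟩
        rwa [show 2 * (μ / 2) = μ by ring] at this
      calc _ ≤ ENNReal.ofReal (C * F (μ / 2) / (μ / 2))
            + ENNReal.ofReal (μ / 2)⁻¹ * ENNReal.ofReal (F μ - F (μ / 2)) :=
            add_le_add hI1 hI2
        _ = ENNReal.ofReal (C * F (μ / 2) / (μ / 2) + (μ / 2)⁻¹ * (F μ - F (μ / 2))) := by
            have hd : 0 ≤ F μ - F (μ / 2) := sub_nonneg.2 (F.mono (by linarith))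
            have ha : 0 ≤ F (μ / 2) := hFnonneg _
            have hCpos : (0:ℝ) ≤ C := by
              have : 0 < ε⁻¹ := inv_pos.2 hε
              rw [hC]; linarith
            rw [← ENNReal.ofReal_mul (by positivity),
              ← ENNReal.ofReal_add (by positivity) (by positivity)]
        _ ≤ ENNReal.ofReal (C * F μ / μ) := by
            apply ENNReal.ofReal_le_ofReal
            have hεinv : ε * ε⁻¹ = 1 := mul_inv_cancel₀ hε.ne'
            have ha : 0 ≤ F (μ / 2) := hFnonneg _
            have e1 : C * F (μ / 2) / (μ / 2) = 2 * C * F (μ / 2) / μ := by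
              field_simp
            have e2 : (μ / 2)⁻¹ * (F μ - F (μ / 2)) = 2 * (F μ - F (μ / 2)) / μ := by
              field_simp
            rw [e1, e2, ← add_div, div_le_div_iff₀ hμ hμ]
            have h3 : ε⁻¹ * (2 * (1 + ε) * F (μ / 2)) = 2 * ε⁻¹ * F (μ / 2) + 2 * F (μ / 2) := by
              field_simp
            have h4 : ε⁻¹ * (2 * (1 + ε) * F (μ / 2)) ≤ ε⁻¹ * F μ :=
              mul_le_mul_of_nonneg_left hgrow' (inv_pos.2 hε).le
            rw [h3] at h4
            rw [hC]
            nlinarith [mul_pos hμ hμ, sq_nonneg μ, mul_le_mul_of_nonneg_right h4 hμ.le]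
  -- assemble
  have hmeasf : Measurable fun u : ℝ => ENNReal.ofReal u⁻¹ :=
    ENNReal.measurable_ofReal.comp measurable_inv
  have hUnion : (⋃ N : ℕ, Ioc (lam / 2 ^ N) lam) = Ioc (0:ℝ) lam := by
    ext x
    simp only [mem_iUnion, mem_Ioc]
    constructor
    · rintro ⟨N, h1, h2⟩
      exact ⟨lt_trans (by positivity) h1, h2⟩
    · rintro ⟨h1, h2⟩
      obtain ⟨N, hN⟩ := pow_unbounded_of_one_lt (lam / x) (one_lt_two (α := ℝ))
      refine ⟨N, ?_, h2⟩
      rw [div_lt_iff₀ (by positivity)]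
      rw [div_lt_iff₀ h1] at hN
      linarith
  have hmono : Monotone fun N : ℕ => Ioc (lam / 2 ^ N) lam := by
    intro m n hmn
    apply Ioc_subset_Ioc_left
    apply div_le_div_of_nonneg_left hlam.le (by positivity)
    exact pow_le_pow_right₀ one_le_two hmn
  have hG : ∫⁻ u in Ioc (0:ℝ) lam, ENNReal.ofReal u⁻¹ ∂F.measure
      ≤ ENNReal.ofReal (C * F lam / lam) := by
    have hwd : ∀ s : Set ℝ, MeasurableSet s →
        (F.measure.withDensity fun u => ENNReal.ofReal u⁻¹) s
          = ∫⁻ u in s, ENNReal.ofReal u⁻¹ ∂F.measure := fun s hs => withDensity_apply _ hs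
    rw [← hwd _ measurableSet_Ioc, ← hUnion, hmono.directed_le.measure_iUnion]
    apply iSup_le
    intro N
    rw [hwd _ measurableSet_Ioc]
    exact key N lam hlam le_rfl
  constructor
  · have hlow : ENNReal.ofReal lam⁻¹ * ENNReal.ofReal (F lam)
        ≤ ∫⁻ u in Ioc (0:ℝ) lam, ENNReal.ofReal u⁻¹ ∂F.measure := by
      calc ENNReal.ofReal lam⁻¹ * ENNReal.ofReal (F lam)
          = ENNReal.ofReal lam⁻¹ * F.measure (Ioc 0 lam) := by
            rw [F.measure_Ioc, hF00, sub_zero]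
        _ = ∫⁻ _ in Ioc (0:ℝ) lam, ENNReal.ofReal lam⁻¹ ∂F.measure := (setLIntegral_const _ _).symm
        _ ≤ _ := by
            apply setLIntegral_mono' measurableSet_Ioc
            intro u hu
            exact ENNReal.ofReal_le_ofReal (inv_anti₀ hu.1 hu.2)
    calc ENNReal.ofReal (F lam)
        = ENNReal.ofReal lam * (ENNReal.ofReal lam⁻¹ * ENNReal.ofReal (F lam)) := by
          rw [← mul_assoc, ← ENNReal.ofReal_mul hlam.le, mul_inv_cancel₀ hlam.ne',
            ENNReal.ofReal_one, one_mul]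
      _ ≤ _ := mul_le_mul_right hlow _
  · calc ENNReal.ofReal lam * ∫⁻ u in Ioc (0:ℝ) lam, ENNReal.ofReal u⁻¹ ∂F.measure
        ≤ ENNReal.ofReal lam * ENNReal.ofReal (C * F lam / lam) := mul_le_mul_right hG _
      _ = ENNReal.ofReal (lam * (C * F lam / lam)) := (ENNReal.ofReal_mul hlam.le).symm
      _ = ENNReal.ofReal (C * F lam) := by
          rw [mul_comm, div_mul_cancel₀ _ hlam.ne']
end

section
/- Let (X, μ) be a measure space, let f ∈ L¹(X, μ) ∩ L²(X, μ) be nonzero, and let E > 0. Let G : (0,∞) → [0,∞) be nondecreasing, and define G⁻¹(y) := sup{λ > 0 : G(λ) ≤ y} ∈ [0,∞] (with sup ∅ = 0). Assume the H-Sobolev inequality ∫_X (|f(x)|²/(4E)) · G⁻¹(|f(x)|²/(4E)) dμ(x) ≤ 1 holds. Let φ : [0,∞) → [0,∞) be convex with φ(y) ≤ y · G⁻¹(y²) for all y ≥ 0. Then φ(‖f‖_{L²}² / (2√E · ‖f‖_{L¹})) ≤ 2√E / ‖f‖_{L¹}. -/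
open MeasureTheory Set ENNReal

/-- A convex function on `[0,∞)` has a supporting line at any interior point. -/
lemma supporting_line {φ : ℝ → ℝ} (hφ : ConvexOn ℝ (Ici 0) φ) {m : ℝ} (hm : 0 < m) :
    ∃ c : ℝ, ∀ y ∈ Ici (0:ℝ), φ m + c * (y - m) ≤ φ y := by
  set S : Set ℝ := (fun z => (φ z - φ m) / (z - m)) '' (Ioi m) with hS
  have hne : S.Nonempty := ⟨_, ⟨m + 1, by simp, rfl⟩⟩
  have hlb : ∀ y : ℝ, 0 ≤ y → y < m → (φ m - φ y) / (m - y) ∈ lowerBounds S := by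
    intro y hy hym s hs
    obtain ⟨z, hz, rfl⟩ := hs
    have hz' := mem_Ioi.1 hz
    exact hφ.slope_mono_adjacent (mem_Ici.2 hy) (mem_Ici.2 (by linarith)) hym hz'
  have hbdd : BddBelow S := ⟨_, hlb 0 le_rfl hm⟩
  refine ⟨sInf S, fun y hy => ?_⟩
  rcases lt_trichotomy y m with hym | hym | hym
  · have h1 : (φ m - φ y) / (m - y) ≤ sInf S := le_csInf hne (hlb y hy hym)
    have h2 : (φ m - φ y) / (m - y) * (m - y) ≤ sInf S * (m - y) :=
      mul_le_mul_of_nonneg_right h1 (by linarith)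
    rw [div_mul_cancel₀ _ (by linarith : m - y ≠ 0)] at h2
    nlinarith
  · simp [hym]
  · have h1 : sInf S ≤ (φ y - φ m) / (y - m) := csInf_le hbdd ⟨y, mem_Ioi.2 hym, rfl⟩
    have h2 : sInf S * (y - m) ≤ (φ y - φ m) / (y - m) * (y - m) :=
      mul_le_mul_of_nonneg_right h1 (by linarith)
    rw [div_mul_cancel₀ _ (by linarith : y - m ≠ 0)] at h2
    linarith

/-- inequality (18) of the paper: Nash-type inequality deduced
from the H-Sobolev inequality by Jensen. If
`∫_X (|f|²/(4E)) G⁻¹(|f|²/(4E)) dμ ≤ 1` and `φ : [0,∞) → [0,∞)` is convex with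
`φ(y) ≤ y·G⁻¹(y²)`, then `φ(‖f‖₂²/(2√E ‖f‖₁)) ≤ 2√E/‖f‖₁`. Here
`G⁻¹(y) = sup {λ > 0 | G λ ≤ y}` (in `[0,∞]`, `sup ∅ = 0`). -/
theorem stmt_9 {X : Type*} [MeasurableSpace X] (μ : Measure X)
    (f : X → ℝ) (hf1 : MemLp f 1 μ) (hf2 : MemLp f 2 μ) (hf_ne : ¬ f =ᵐ[μ] 0)
    (E : ℝ) (hE : 0 < E)
    (G : ℝ → ℝ) (hG_nonneg : ∀ l, 0 < l → 0 ≤ G l)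
    (hG_mono : ∀ a b, 0 < a → a ≤ b → G a ≤ G b)
    (Ginv : ℝ → ℝ≥0∞)
    (hGinv : ∀ y, Ginv y
      = sSup {t : ℝ≥0∞ | ∃ l : ℝ, 0 < l ∧ G l ≤ y ∧ t = ENNReal.ofReal l})
    (h_sob : ∫⁻ x, ENNReal.ofReal (‖f x‖ ^ 2 / (4 * E))
        * Ginv (‖f x‖ ^ 2 / (4 * E)) ∂μ ≤ 1)
    (φ : ℝ → ℝ) (hφ_conv : ConvexOn ℝ (Ici 0) φ)
    (hφ_nonneg : ∀ y, 0 ≤ y → 0 ≤ φ y)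
    (hφ_le : ∀ y, 0 ≤ y → ENNReal.ofReal (φ y) ≤ ENNReal.ofReal y * Ginv (y ^ 2)) :
    φ ((eLpNorm f 2 μ).toReal ^ 2
        / (2 * Real.sqrt E * (eLpNorm f 1 μ).toReal))
      ≤ 2 * Real.sqrt E / (eLpNorm f 1 μ).toReal := by
  have hs : 0 < Real.sqrt E := Real.sqrt_pos.2 hE
  set c2 : ℝ := 2 * Real.sqrt E with hc2
  have hc2pos : 0 < c2 := by positivity
  have hsq : c2 * c2 = 4 * E := by
    have := Real.mul_self_sqrt hE.le
    rw [hc2]; nlinarith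
  -- integrability facts
  have hfm := hf1.aestronglyMeasurable
  have hint1 : Integrable f μ := memLp_one_iff_integrable.1 hf1
  have hint1n : Integrable (fun x => ‖f x‖) μ := hint1.norm
  have hint2 : Integrable (fun x => ‖f x‖ ^ 2) μ := by
    have h := hf2.integrable_norm_rpow two_ne_zero ENNReal.ofNat_ne_top
    simpa [ENNReal.toReal_ofNat, Real.rpow_natCast] using h
  set a : ℝ := ∫ x, ‖f x‖ ∂μ with ha
  set b : ℝ := ∫ x, ‖f x‖ ^ 2 ∂μ with hb
  have ha_nonneg : 0 ≤ a := integral_nonneg fun x => norm_nonneg _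
  have hb_nonneg : 0 ≤ b := integral_nonneg fun x => sq_nonneg _
  have hN1 : (eLpNorm f 1 μ).toReal = a := by
    rw [eLpNorm_one_eq_lintegral_enorm, ← ofReal_integral_norm_eq_lintegral_enorm hint1,
      ENNReal.toReal_ofReal ha_nonneg]
  have heLp1_ne : eLpNorm f 1 μ ≠ 0 :=
    fun h0 => hf_ne ((eLpNorm_eq_zero_iff hfm one_ne_zero).1 h0)
  have hapos : 0 < a := by
    rw [← hN1]
    exact ENNReal.toReal_pos heLp1_ne hf1.2.ne
  have hN2 : (eLpNorm f 2 μ).toReal ^ 2 = b := by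
    have h2 : eLpNorm f 2 μ
        = (∫⁻ x, (‖f x‖₊ : ℝ≥0∞) ^ (2 : ℝ) ∂μ) ^ (1 / (2 : ℝ)) := by
      rw [eLpNorm_eq_lintegral_rpow_enorm_toReal two_ne_zero ENNReal.ofNat_ne_top]
      norm_num
      rfl
    have hJ : ∫⁻ x, (‖f x‖₊ : ℝ≥0∞) ^ (2 : ℝ) ∂μ = ENNReal.ofReal b := by
      rw [hb, ofReal_integral_eq_lintegral_ofReal hint2
        (Filter.Eventually.of_forall fun x => sq_nonneg _)]
      refine lintegral_congr fun x => ?_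
      rw [show ((2:ℝ)) = ((2:ℕ):ℝ) by norm_num, ENNReal.rpow_natCast,
        ← enorm_eq_nnnorm, ← ofReal_norm, ← ENNReal.ofReal_pow (norm_nonneg _)]
    rw [h2, hJ, ← ENNReal.toReal_rpow, ENNReal.toReal_ofReal hb_nonneg,
      ← Real.rpow_natCast (b ^ (1 / (2:ℝ))) 2, ← Real.rpow_mul hb_nonneg]
    norm_num
  have hbpos : 0 < b := by
    rw [← hN2]
    have : eLpNorm f 2 μ ≠ 0 :=
      fun h0 => hf_ne ((eLpNorm_eq_zero_iff hfm two_ne_zero).1 h0)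
    have := ENNReal.toReal_pos this hf2.2.ne
    positivity
  set m : ℝ := b / (c2 * a) with hm
  have hmpos : 0 < m := by positivity
  obtain ⟨k, hk⟩ := supporting_line hφ_conv hmpos
  -- the affine minorant times |f|
  set h : X → ℝ := fun x => φ m * ‖f x‖ + (k / c2) * ‖f x‖ ^ 2 - k * m * ‖f x‖ with hh
  have i1 : Integrable (fun x => φ m * ‖f x‖) μ := hint1n.const_mul _
  have i2 : Integrable (fun x => k / c2 * ‖f x‖ ^ 2) μ := hint2.const_mul _
  have i3 : Integrable (fun x => k * m * ‖f x‖) μ := hint1n.const_mul _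
  have hinth : Integrable h μ := (i1.add i2).sub i3
  have hma : m * a = b / c2 := by
    rw [hm, div_mul_eq_mul_div, mul_comm c2 a, ← div_div,
      mul_div_assoc, div_self hapos.ne', mul_one]
  have hinteg : ∫ x, h x ∂μ = φ m * a := by
    have e1 : ∫ x, h x ∂μ
        = ∫ x, (φ m * ‖f x‖ + k / c2 * ‖f x‖ ^ 2) ∂μ - ∫ x, k * m * ‖f x‖ ∂μ :=
      integral_sub (i1.add i2) i3
    have e2 : ∫ x, (φ m * ‖f x‖ + k / c2 * ‖f x‖ ^ 2) ∂μ
        = ∫ x, φ m * ‖f x‖ ∂μ + ∫ x, k / c2 * ‖f x‖ ^ 2 ∂μ := integral_add i1 i2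
    rw [e1, e2, integral_const_mul, integral_const_mul, integral_const_mul, ← ha, ← hb]
    have hkm : k * m * a = k / c2 * b := by
      rw [mul_assoc, hma]; ring
    rw [hkm]; ring
  -- key pointwise bounds and the chain of inequalities in ℝ≥0∞
  have key : ENNReal.ofReal (φ m * a) ≤ ENNReal.ofReal c2 := by
    calc ENNReal.ofReal (φ m * a) = ENNReal.ofReal (∫ x, h x ∂μ) := by rw [hinteg]
      _ ≤ ENNReal.ofReal (∫ x, max (h x) 0 ∂μ) := by
          refine ENNReal.ofReal_le_ofReal (integral_mono hinth hinth.pos_part ?_)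
          intro x; exact le_max_left _ _
      _ = ∫⁻ x, ENNReal.ofReal (max (h x) 0) ∂μ :=
          ofReal_integral_eq_lintegral_ofReal hinth.pos_part
            (Filter.Eventually.of_forall fun x => le_max_right _ _)
      _ = ∫⁻ x, ENNReal.ofReal (h x) ∂μ := by
          refine lintegral_congr fun x => ?_
          rcases le_total 0 (h x) with h0 | h0
          · rw [max_eq_left h0]
          · rw [max_eq_right h0, ENNReal.ofReal_eq_zero.2 h0, ENNReal.ofReal_zero]
      _ ≤ ∫⁻ x, ENNReal.ofReal (φ (‖f x‖ / c2)) * ENNReal.ofReal ‖f x‖ ∂μ := by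
          refine lintegral_mono fun x => ?_
          have hxr : h x = (φ m + k * (‖f x‖ / c2 - m)) * ‖f x‖ := by
            simp only [hh]; ring
          rw [hxr, ENNReal.ofReal_mul' (norm_nonneg _)]
          exact mul_le_mul_left
            (ENNReal.ofReal_le_ofReal (hk _ (mem_Ici.2 (by positivity)))) _
      _ ≤ ∫⁻ x, ENNReal.ofReal c2 * (ENNReal.ofReal (‖f x‖ ^ 2 / (4 * E))
            * Ginv (‖f x‖ ^ 2 / (4 * E))) ∂μ := by
          refine lintegral_mono fun x => ?_
          have hy : (‖f x‖ / c2) ^ 2 = ‖f x‖ ^ 2 / (4 * E) := by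
            rw [div_pow, show c2 ^ 2 = 4 * E by nlinarith]
          have h1 := hφ_le (‖f x‖ / c2) (by positivity)
          rw [hy] at h1
          calc ENNReal.ofReal (φ (‖f x‖ / c2)) * ENNReal.ofReal ‖f x‖
              ≤ ENNReal.ofReal (‖f x‖ / c2) * Ginv (‖f x‖ ^ 2 / (4 * E))
                * ENNReal.ofReal ‖f x‖ := mul_le_mul_left h1 _
            _ = ENNReal.ofReal (‖f x‖ / c2 * ‖f x‖)
                * Ginv (‖f x‖ ^ 2 / (4 * E)) := by
                rw [ENNReal.ofReal_mul' (norm_nonneg _)]; ring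
            _ = ENNReal.ofReal c2 * (ENNReal.ofReal (‖f x‖ ^ 2 / (4 * E))
                * Ginv (‖f x‖ ^ 2 / (4 * E))) := by
                have hr : ∀ t : ℝ, t / c2 * t = c2 * (t ^ 2 / (4 * E)) := by
                  intro t; rw [← hsq]; field_simp
                rw [hr ‖f x‖, ENNReal.ofReal_mul hc2pos.le, mul_assoc]
      _ = ENNReal.ofReal c2 * ∫⁻ x, ENNReal.ofReal (‖f x‖ ^ 2 / (4 * E))
            * Ginv (‖f x‖ ^ 2 / (4 * E)) ∂μ :=
          lintegral_const_mul' _ _ ENNReal.ofReal_ne_top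
      _ ≤ ENNReal.ofReal c2 * 1 := mul_le_mul_right h_sob _
      _ = ENNReal.ofReal c2 := mul_one _
  have hfin : φ m * a ≤ c2 :=
    (ENNReal.ofReal_le_ofReal_iff hc2pos.le).1 key
  have hres : φ m ≤ c2 / a := (le_div_iff₀ hapos).2 hfin
  rw [hN1, hN2]
  exact hres
end

section
/- Let (X, μ) be a measure space, let f ∈ L¹(X, μ) ∩ L²(X, μ) be nonzero, and let E > 0. Let G : (0,∞) → [0,∞) be nondecreasing and right-continuous, define G⁻¹(y) := sup{λ > 0 : G(λ) ≤ y} ∈ [0,∞] (with sup ∅ = 0), and let C > 0 and φ : [0,∞) → [0,∞) be convex with C · y · G⁻¹(y²) ≤ φ(y) ≤ y · G⁻¹(y²) for all y ≥ 0. Assume φ(‖f‖_{L²}² / (2√E · ‖f‖_{L¹})) ≤ 2√E / ‖f‖_{L¹}. Then ‖f‖_{L²}⁴ ≤ 4E · ‖f‖_{L¹}² · G(4E / (C‖f‖_{L²}²)). -/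
open MeasureTheory Set ENNReal

/-- inequality (19) of the paper. If `G` is nondecreasing and
right-continuous on `(0,∞)`, `φ : [0,∞) → [0,∞)` is convex with
`C·y·G⁻¹(y²) ≤ φ(y) ≤ y·G⁻¹(y²)`, and the Nash-type inequality (18)
`φ(‖f‖₂²/(2√E ‖f‖₁)) ≤ 2√E/‖f‖₁` holds, then
`‖f‖₂⁴ ≤ 4E ‖f‖₁² G(4E/(C‖f‖₂²))`. Here
`G⁻¹(y) = sup {λ > 0 | G λ ≤ y}` (in `[0,∞]`, `sup ∅ = 0`). -/
theorem stmt_10 {X : Type*} [MeasurableSpace X] (μ : Measure X)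
    (f : X → ℝ) (hf1 : MemLp f 1 μ) (hf2 : MemLp f 2 μ) (hf_ne : ¬ f =ᵐ[μ] 0)
    (E : ℝ) (hE : 0 < E)
    (G : ℝ → ℝ) (hG_nonneg : ∀ l, 0 < l → 0 ≤ G l)
    (hG_mono : ∀ a b, 0 < a → a ≤ b → G a ≤ G b)
    (hG_rc : ∀ l, 0 < l → ContinuousWithinAt G (Ici l) l)
    (Ginv : ℝ → ℝ≥0∞)
    (hGinv : ∀ y, Ginv y
      = sSup {t : ℝ≥0∞ | ∃ l : ℝ, 0 < l ∧ G l ≤ y ∧ t = ENNReal.ofReal l})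
    (C : ℝ) (hC : 0 < C)
    (φ : ℝ → ℝ) (hφ_conv : ConvexOn ℝ (Ici 0) φ)
    (hφ_nonneg : ∀ y, 0 ≤ y → 0 ≤ φ y)
    (hφ_ge : ∀ y, 0 ≤ y →
      ENNReal.ofReal C * ENNReal.ofReal y * Ginv (y ^ 2) ≤ ENNReal.ofReal (φ y))
    (hφ_le : ∀ y, 0 ≤ y → ENNReal.ofReal (φ y) ≤ ENNReal.ofReal y * Ginv (y ^ 2))
    (h_nash : φ ((eLpNorm f 2 μ).toReal ^ 2
        / (2 * Real.sqrt E * (eLpNorm f 1 μ).toReal))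
      ≤ 2 * Real.sqrt E / (eLpNorm f 1 μ).toReal) :
    (eLpNorm f 2 μ).toReal ^ 4
      ≤ 4 * E * (eLpNorm f 1 μ).toReal ^ 2
        * G (4 * E / (C * (eLpNorm f 2 μ).toReal ^ 2)) := by
  set n1 := (eLpNorm f 1 μ).toReal with hn1def
  set n2 := (eLpNorm f 2 μ).toReal with hn2def
  have hsm := hf1.1
  have h1ne : eLpNorm f 1 μ ≠ 0 := by
    simpa [eLpNorm_eq_zero_iff hsm one_ne_zero] using hf_ne
  have h2ne : eLpNorm f 2 μ ≠ 0 := by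
    simpa [eLpNorm_eq_zero_iff hsm two_ne_zero] using hf_ne
  have hn1 : 0 < n1 := ENNReal.toReal_pos h1ne hf1.2.ne
  have hn2 : 0 < n2 := ENNReal.toReal_pos h2ne hf2.2.ne
  have hsE : 0 < Real.sqrt E := Real.sqrt_pos.mpr hE
  set y := n2 ^ 2 / (2 * Real.sqrt E * n1) with hydef
  have hy : 0 < y := by positivity
  set t := 4 * E / (C * n2 ^ 2) with htdef
  have ht : 0 < t := by positivity
  -- step 1: C * y * Ginv(y²) ≤ 2√E/n1
  have key : ENNReal.ofReal C * ENNReal.ofReal y * Ginv (y ^ 2)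
      ≤ ENNReal.ofReal (2 * Real.sqrt E / n1) :=
    le_trans (hφ_ge y hy.le) (ENNReal.ofReal_le_ofReal h_nash)
  -- step 2: Ginv(y²) ≤ t
  have hCy : (0:ℝ) < C * y := by positivity
  have key2 : Ginv (y ^ 2) ≤ ENNReal.ofReal t := by
    have hne0 : ENNReal.ofReal (C * y) ≠ 0 := by
      simpa using (ENNReal.ofReal_pos.mpr hCy).ne'
    have hnetop : ENNReal.ofReal (C * y) ≠ ⊤ := ENNReal.ofReal_ne_top
    have hmul : ENNReal.ofReal (C * y) * Ginv (y ^ 2)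
        ≤ ENNReal.ofReal (2 * Real.sqrt E / n1) := by
      rw [ENNReal.ofReal_mul hC.le]; exact key
    have hdiv : Ginv (y ^ 2)
        ≤ ENNReal.ofReal (2 * Real.sqrt E / n1) / ENNReal.ofReal (C * y) :=
      (ENNReal.le_div_iff_mul_le (Or.inl hne0) (Or.inl hnetop)).mpr
        (by rw [mul_comm]; exact hmul)
    refine hdiv.trans (le_of_eq ?_)
    rw [← ENNReal.ofReal_div_of_pos hCy]
    congr 1
    have hEE : Real.sqrt E ^ 2 = E := Real.sq_sqrt hE.le
    rw [htdef, hydef]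
    field_simp
    linear_combination 4 * hEE
  -- step 3: y² ≤ G t
  have hGt : y ^ 2 ≤ G t := by
    by_contra hlt
    push_neg at hlt
    have hev : ∀ᶠ l in nhdsWithin t (Ici t), G l < y ^ 2 :=
      (hG_rc t ht).eventually_lt_const hlt
    have hev' : ∀ᶠ l in nhdsWithin t (Ioi t), G l < y ^ 2 :=
      hev.filter_mono (nhdsWithin_mono t Ioi_subset_Ici_self)
    obtain ⟨l, hl, hlgt⟩ := (hev'.and self_mem_nhdsWithin).exists
    have hl0 : 0 < l := ht.trans hlgt
    have hmem : ENNReal.ofReal l ∈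
        {s : ℝ≥0∞ | ∃ l' : ℝ, 0 < l' ∧ G l' ≤ y ^ 2 ∧ s = ENNReal.ofReal l'} :=
      ⟨l, hl0, hl.le, rfl⟩
    have : ENNReal.ofReal l ≤ ENNReal.ofReal t := by
      calc ENNReal.ofReal l ≤ Ginv (y ^ 2) := by rw [hGinv]; exact le_sSup hmem
        _ ≤ ENNReal.ofReal t := key2
    have : l ≤ t := by
      rwa [ENNReal.ofReal_le_ofReal_iff ht.le] at this
    exact absurd this (not_le.mpr hlgt)
  -- step 4: arithmetic
  have hyval : y ^ 2 = n2 ^ 4 / (4 * E * n1 ^ 2) := by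
    have hEE : Real.sqrt E ^ 2 = E := Real.sq_sqrt hE.le
    rw [hydef]
    field_simp
    linear_combination (-4) * hEE
  rw [hyval] at hGt
  have h4 : (0:ℝ) < 4 * E * n1 ^ 2 := by positivity
  calc n2 ^ 4 = (n2 ^ 4 / (4 * E * n1 ^ 2)) * (4 * E * n1 ^ 2) := by field_simp
    _ ≤ G t * (4 * E * n1 ^ 2) := by
        exact mul_le_mul_of_nonneg_right hGt h4.le
    _ = 4 * E * n1 ^ 2 * G t := by ring
end

section
/- Let G : (0,∞) → [0,∞) be nondecreasing and let C > 0. Suppose G satisfies the exponential growth condition G(u·y) ≤ e^{Cu} · G(y) for all u, y > 0. Then for every y > 0: ∫₀^∞ e^{−u} G(u·y) du ≤ 3 · G(2C·y). -/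
open MeasureTheory Set ENNReal

/-- analytic core of the third bullet of Proposition 3.2.
If the nondecreasing `G : (0,∞) → [0,∞)` satisfies the exponential growth
condition `G(uy) ≤ e^{Cu} G(y)` for all `u, y > 0`, then
`∫₀^∞ e^{−u} G(uy) du ≤ 3 G(2Cy)` for every `y > 0`. -/
theorem stmt_11 (G : ℝ → ℝ) (hG_nonneg : ∀ l, 0 < l → 0 ≤ G l)
    (hG_mono : ∀ a b, 0 < a → a ≤ b → G a ≤ G b)
    (C : ℝ) (hC : 0 < C)
    (h_grow : ∀ u y : ℝ, 0 < u → 0 < y → G (u * y) ≤ Real.exp (C * u) * G y)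
    (y : ℝ) (hy : 0 < y) :
    ∫⁻ u in Ioi (0 : ℝ), ENNReal.ofReal (Real.exp (-u) * G (u * y))
      ≤ ENNReal.ofReal (3 * G (2 * C * y)) := by
  set K := G (2 * C * y) with hK
  have hKpos : 0 ≤ K := hG_nonneg _ (by positivity)
  -- pointwise bound
  have hpt : ∀ u : ℝ, 0 < u →
      Real.exp (-u) * G (u * y) ≤ (Real.exp (-u) + Real.exp (-u / 2)) * K := by
    intro u hu
    rcases le_or_gt u (2 * C) with h | h
    · have h1 : G (u * y) ≤ K := hG_mono _ _ (by positivity)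
        (by nlinarith)
      have : Real.exp (-u) * G (u * y) ≤ Real.exp (-u) * K :=
        mul_le_mul_of_nonneg_left h1 (Real.exp_pos _).le
      nlinarith [Real.exp_pos (-u / 2)]
    · have huy : u * y = (u / (2 * C)) * (2 * C * y) := by
        field_simp
      have h2 : G (u * y) ≤ Real.exp (C * (u / (2 * C))) * K := by
        rw [huy]
        exact h_grow _ _ (by positivity) (by positivity)
      have h3 : C * (u / (2 * C)) = u / 2 := by field_simp
      rw [h3] at h2
      have h4 : Real.exp (-u) * G (u * y) ≤ Real.exp (-u) * (Real.exp (u / 2) * K) :=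
        mul_le_mul_of_nonneg_left h2 (Real.exp_pos _).le
      have h5 : Real.exp (-u) * Real.exp (u / 2) = Real.exp (-u / 2) := by
        rw [← Real.exp_add]; ring_nf
      nlinarith [Real.exp_pos (-u), mul_nonneg (Real.exp_pos (-u)).le hKpos]
  -- integrability of the majorant
  have hint1 : IntegrableOn (fun u : ℝ => Real.exp (-u)) (Ioi 0) := by
    simpa using exp_neg_integrableOn_Ioi 0 one_pos
  have hint2 : IntegrableOn (fun u : ℝ => Real.exp (-u / 2)) (Ioi 0) := by
    have := exp_neg_integrableOn_Ioi 0 (by norm_num : (0:ℝ) < 1/2)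
    simpa [neg_div, div_eq_inv_mul, mul_comm] using this
  have hint : IntegrableOn (fun u : ℝ => (Real.exp (-u) + Real.exp (-u / 2)) * K) (Ioi 0) :=
    (hint1.add hint2).mul_const K
  -- value of the integral of the majorant
  have hval1 : (∫ u in Ioi (0:ℝ), Real.exp (-u)) = 1 := integral_exp_neg_Ioi_zero
  have hval2 : (∫ u in Ioi (0:ℝ), Real.exp (-u / 2)) = 2 := by
    have := integral_comp_mul_left_Ioi (fun x : ℝ => Real.exp (-x)) 0
      (by norm_num : (0:ℝ) < 1/2)
    simp only [mul_zero, smul_eq_mul] at this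
    have heq : (∫ u in Ioi (0:ℝ), Real.exp (-u / 2))
        = ∫ x in Ioi (0:ℝ), Real.exp (-(1/2 * x)) := by
      congr 1; ext x; ring_nf
    rw [heq, this, hval1]; norm_num
  have hval : (∫ u in Ioi (0:ℝ), (Real.exp (-u) + Real.exp (-u / 2)) * K) = 3 * K := by
    rw [integral_mul_const, integral_add hint1 hint2, hval1, hval2]; ring
  calc ∫⁻ u in Ioi (0 : ℝ), ENNReal.ofReal (Real.exp (-u) * G (u * y))
      ≤ ∫⁻ u in Ioi (0:ℝ), ENNReal.ofReal ((Real.exp (-u) + Real.exp (-u / 2)) * K) := by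
        refine setLIntegral_mono_ae (by fun_prop) ?_
        filter_upwards with u hu using ENNReal.ofReal_le_ofReal (hpt u hu)
    _ = ENNReal.ofReal (3 * K) := by
        rw [← ofReal_integral_eq_lintegral_ofReal hint ?_, hval]
        filter_upwards with u
        positivity
end

section
/- Let (X, μ) be a measure space, let f ∈ L²(X, μ) be nonzero, let E > 0, and let C > 0 and β > 0. Suppose that for every λ > 0 there exist g_λ, h_λ ∈ L²(X, μ) with f = g_λ + h_λ almost everywhere, ‖g_λ‖_{L^∞}² ≤ C λ^β · E, and that λ ↦ ‖h_λ‖_{L²}² is measurable with ∫₀^∞ ‖h_λ‖_{L²}² dλ ≤ E. Then f ∈ L^q(X, μ) for q = 2(1 + 1/β), and ‖f‖_{L^q} ≤ 2 · C^{1/(βq)} · √E. -/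
open MeasureTheory Set ENNReal

private lemma enorm_sq_eq' (r : ℝ) : ((‖r‖₊ : ℝ≥0∞)) ^ 2 = ENNReal.ofReal (r ^ 2) := by
  rw [← enorm_eq_nnnorm, ← ofReal_norm, ← ENNReal.ofReal_pow (norm_nonneg r), Real.norm_eq_abs, sq_abs]

/-- polynomial-decay case of Theorem 1.1, yielding
Theorem 1.4. Given a spectral-type decomposition `f = g λ + h λ` with
`‖g λ‖_∞² ≤ C λ^β E` and `∫₀^∞ ‖h λ‖₂² dλ ≤ E`, one has `f ∈ L^q` for
`q = 2(1 + 1/β)` with `‖f‖_q ≤ 2 C^{1/(βq)} √E`. -/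
theorem stmt_18 {X : Type*} [MeasurableSpace X] (μ : Measure X)
    (f : X → ℝ) (hf : MemLp f 2 μ) (hf_ne : ¬ f =ᵐ[μ] 0)
    (E : ℝ) (hE : 0 < E) (C : ℝ) (hC : 0 < C) (β : ℝ) (hβ : 0 < β)
    (g h : ℝ → X → ℝ)
    (h_dec : ∀ l, 0 < l → MemLp (g l) 2 μ ∧ MemLp (h l) 2 μ ∧
      f =ᵐ[μ] g l + h l ∧
      (eLpNorm (g l) ⊤ μ) ^ 2 ≤ ENNReal.ofReal (C * l ^ β * E))
    (h_meas : Measurable fun l : ℝ => (eLpNorm (h l) 2 μ) ^ 2)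
    (h_int : ∫⁻ l in Ioi (0 : ℝ), (eLpNorm (h l) 2 μ) ^ 2 ≤ ENNReal.ofReal E)
    (q : ℝ) (hq : q = 2 * (1 + 1 / β)) :
    MemLp f (ENNReal.ofReal q) μ ∧
      eLpNorm f (ENNReal.ofReal q) μ
        ≤ ENNReal.ofReal (2 * C ^ (1 / (β * q)) * Real.sqrt E) := by
  have hq0 : 0 < q := by rw [hq]; positivity
  have hq' : q = 2 + 2 * β⁻¹ := by rw [hq]; ring
  have hfm := hf.1
  have hAE : AEFinStronglyMeasurable f μ :=
    hf.aefinStronglyMeasurable two_ne_zero ENNReal.ofNat_ne_top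
  set t : Set X := hAE.sigmaFiniteSet with htdef
  have ht : MeasurableSet t := hAE.measurableSet
  haveI : SigmaFinite (μ.restrict t) := hAE.sigmaFinite_restrict
  obtain ⟨F, hF, hfF⟩ : ∃ F : X → ℝ, Measurable F ∧ f =ᵐ[μ] F :=
    ⟨hfm.aemeasurable.mk f, hfm.aemeasurable.measurable_mk, hfm.aemeasurable.ae_eq_mk⟩
  set K : ℝ := 4 * C * E with hKdef
  have hK : 0 < K := by positivity
  set G : ℝ → X → ℝ≥0∞ :=
    fun l x => if K * l ^ β < (F x) ^ 2 then ((‖F x‖₊ : ℝ≥0∞)) ^ 2 else 0 with hGdef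
  -- measurability
  have hGmeas : Measurable (Function.uncurry G) := by
    apply Measurable.ite
    · exact measurableSet_lt (by fun_prop) ((hF.comp measurable_snd).pow_const 2)
    · exact ((hF.comp measurable_snd).nnnorm.coe_nnreal_ennreal).pow_const 2
    · exact measurable_const
  -- Step C : per-λ bound
  have stepC : ∀ l ∈ Ioi (0:ℝ),
      ∫⁻ x, G l x ∂(μ.restrict t) ≤ 4 * (eLpNorm (h l) 2 μ) ^ 2 := by
    intro l hl
    rw [mem_Ioi] at hl
    obtain ⟨-, hh2, hfgh, hgE⟩ := h_dec l hl
    have hlβ : 0 < l ^ β := Real.rpow_pos_of_pos hl β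
    have hCLE : 0 < C * l ^ β * E := by positivity
    set M : ℝ := Real.sqrt (C * l ^ β * E) with hM
    have hM0 : 0 ≤ M := Real.sqrt_nonneg _
    have hMsq : M ^ 2 = C * l ^ β * E := Real.sq_sqrt hCLE.le
    have hgb : ∀ᵐ x ∂μ, ‖g l x‖ ≤ M := by
      filter_upwards [ae_le_eLpNormEssSup (f := g l) (μ := μ)] with x hx
      have h2 : (ENNReal.ofReal ‖g l x‖) ^ 2 ≤ ENNReal.ofReal (C * l ^ β * E) := by
        rw [ofReal_norm, enorm_eq_nnnorm]
        calc ((‖g l x‖₊ : ℝ≥0∞)) ^ 2 ≤ (eLpNormEssSup (g l) μ) ^ 2 :=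
              pow_le_pow_left₀ zero_le hx 2
        _ ≤ _ := by rw [← eLpNorm_exponent_top]; exact hgE
      rw [← ENNReal.ofReal_pow (norm_nonneg _),
        ENNReal.ofReal_le_ofReal_iff hCLE.le] at h2
      calc ‖g l x‖ = Real.sqrt (‖g l x‖ ^ 2) := (Real.sqrt_sq (norm_nonneg _)).symm
      _ ≤ M := Real.sqrt_le_sqrt h2
    have hpt : ∀ᵐ x ∂μ, G l x ≤ 4 * ((‖h l x‖₊ : ℝ≥0∞)) ^ 2 := by
      filter_upwards [hfF, hfgh, hgb] with x hx1 hx2 hx3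
      by_cases hc : K * l ^ β < (F x) ^ 2
      · have hG : G l x = ENNReal.ofReal ((f x) ^ 2) := by
          rw [hGdef]; simp only [if_pos hc, enorm_sq_eq', hx1]
        have hx2' : f x = g l x + h l x := hx2
        have habs : |g l x| ≤ M := by rwa [Real.norm_eq_abs] at hx3
        have hgsq : (g l x) ^ 2 ≤ M ^ 2 := by
          have := abs_le.mp habs
          nlinarith [this.1, this.2]
        have hfsq : 4 * M ^ 2 < (f x) ^ 2 := by
          rw [hx1, hMsq]; rw [hKdef] at hc; nlinarith [hc]
        have key : (f x) ^ 2 ≤ 4 * (h l x) ^ 2 := by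
          have hc' : h l x = f x - g l x := by linarith
          rw [hc']
          nlinarith [sq_nonneg (f x - 2 * g l x), hgsq, hfsq]
        calc G l x = ENNReal.ofReal ((f x) ^ 2) := hG
        _ ≤ ENNReal.ofReal (4 * (h l x) ^ 2) := ENNReal.ofReal_le_ofReal key
        _ = 4 * ((‖h l x‖₊ : ℝ≥0∞)) ^ 2 := by
            rw [ENNReal.ofReal_mul (by norm_num), ← enorm_sq_eq']
            norm_num
      · rw [hGdef]; simp only [if_neg hc]; exact zero_le
    have hsq : (eLpNorm (h l) 2 μ) ^ 2 = ∫⁻ x, ((‖h l x‖₊ : ℝ≥0∞)) ^ 2 ∂μ := by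
      have h2t : ((2:ℝ≥0∞)).toReal = 2 := by norm_num
      rw [eLpNorm_eq_lintegral_rpow_enorm_toReal two_ne_zero ENNReal.ofNat_ne_top, h2t,
        ← ENNReal.rpow_natCast _ 2, ← ENNReal.rpow_mul, one_div, Nat.cast_ofNat,
        inv_mul_cancel₀ (two_ne_zero), ENNReal.rpow_one]
      refine lintegral_congr fun x => ?_
      rw [← ENNReal.rpow_natCast _ 2, Nat.cast_ofNat]
      rfl
    calc ∫⁻ x, G l x ∂(μ.restrict t)
        ≤ ∫⁻ x, 4 * ((‖h l x‖₊ : ℝ≥0∞)) ^ 2 ∂(μ.restrict t) :=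
          lintegral_mono_ae (ae_restrict_of_ae hpt)
    _ ≤ ∫⁻ x, 4 * ((‖h l x‖₊ : ℝ≥0∞)) ^ 2 ∂μ := setLIntegral_le_lintegral _ _
    _ = 4 * ∫⁻ x, ((‖h l x‖₊ : ℝ≥0∞)) ^ 2 ∂μ := lintegral_const_mul' _ _ (by norm_num)
    _ = 4 * (eLpNorm (h l) 2 μ) ^ 2 := by rw [hsq]
  -- swap
  have hswap : ∫⁻ x, (∫⁻ l in Ioi (0:ℝ), G l x) ∂(μ.restrict t)
      = ∫⁻ l in Ioi (0:ℝ), ∫⁻ x, G l x ∂(μ.restrict t) := by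
    exact (lintegral_lintegral_swap (μ := volume.restrict (Ioi 0)) (ν := μ.restrict t)
      (f := G) hGmeas.aemeasurable).symm
  -- Step A : inner λ-integral
  have hA : ∀ x : X, ∫⁻ l in Ioi (0:ℝ), G l x
      = ENNReal.ofReal ((F x) ^ 2) * ENNReal.ofReal (((F x) ^ 2 / K) ^ β⁻¹) := by
    intro x
    set Λ : ℝ := ((F x) ^ 2 / K) ^ β⁻¹ with hΛdef
    have hset : ∀ᵐ l ∂(volume : Measure ℝ), l ∈ Ioi (0:ℝ) →
        G l x = (Ioo (0:ℝ) Λ).indicator (fun _ => ENNReal.ofReal ((F x) ^ 2)) l := by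
      refine ae_of_all _ fun l hl => ?_
      rw [mem_Ioi] at hl
      have hcond : K * l ^ β < (F x) ^ 2 ↔ l < Λ := by
        rw [hΛdef, Real.lt_rpow_inv_iff_of_pos hl.le
          (div_nonneg (sq_nonneg _) hK.le) hβ, lt_div_iff₀ hK, mul_comm]
      by_cases hlt : l < Λ
      · rw [hGdef]
        simp only [if_pos (hcond.mpr hlt), indicator_of_mem (mem_Ioo.mpr ⟨hl, hlt⟩),
          enorm_sq_eq']
      · rw [hGdef]
        simp only [if_neg (fun hcc => hlt (hcond.mp hcc)),
          indicator_of_notMem (fun hm => hlt (mem_Ioo.mp hm).2)]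
    calc ∫⁻ l in Ioi (0:ℝ), G l x
        = ∫⁻ l in Ioi (0:ℝ),
            (Ioo (0:ℝ) Λ).indicator (fun _ => ENNReal.ofReal ((F x) ^ 2)) l :=
          setLIntegral_congr_fun_ae measurableSet_Ioi hset
      _ = ENNReal.ofReal ((F x) ^ 2) * ENNReal.ofReal Λ := by
          rw [lintegral_indicator measurableSet_Ioo, setLIntegral_const,
            Measure.restrict_apply measurableSet_Ioo,
            inter_eq_self_of_subset_left Ioo_subset_Ioi_self, Real.volume_Ioo, sub_zero]
  -- pointwise identity to recover |f|^q
  have hptq : ∀ x : X, ENNReal.ofReal (K ^ β⁻¹) *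
      (ENNReal.ofReal ((F x) ^ 2) * ENNReal.ofReal (((F x) ^ 2 / K) ^ β⁻¹))
      = ((‖F x‖₊ : ℝ≥0∞)) ^ q := by
    intro x
    set t : ℝ := ‖F x‖ with ht
    have ht0 : 0 ≤ t := norm_nonneg _
    have htsq : (F x) ^ 2 = t ^ 2 := by rw [ht, Real.norm_eq_abs, sq_abs]
    have hreal : K ^ β⁻¹ * (t ^ 2 * ((t ^ 2 / K) ^ β⁻¹)) = t ^ q := by
      rw [Real.div_rpow (sq_nonneg t) hK.le]
      rcases eq_or_lt_of_le ht0 with h0 | h0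
      · rw [← h0, Real.zero_rpow hq0.ne']
        norm_num
      · have hKβ : (0:ℝ) < K ^ β⁻¹ := Real.rpow_pos_of_pos hK _
        have h2 : t ^ (2:ℕ) * ((t ^ (2:ℕ)) ^ β⁻¹) = t ^ q := by
          rw [← Real.rpow_natCast t 2, ← Real.rpow_mul ht0, ← Real.rpow_add h0, hq']
          norm_num
        calc K ^ β⁻¹ * (t ^ 2 * ((t ^ 2) ^ β⁻¹ / K ^ β⁻¹))
            = (t ^ 2 * ((t ^ 2) ^ β⁻¹)) * (K ^ β⁻¹ / K ^ β⁻¹) := by ring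
          _ = t ^ 2 * ((t ^ 2) ^ β⁻¹) := by rw [div_self hKβ.ne']; ring
          _ = t ^ q := h2
    calc ENNReal.ofReal (K ^ β⁻¹) *
        (ENNReal.ofReal ((F x) ^ 2) * ENNReal.ofReal (((F x) ^ 2 / K) ^ β⁻¹))
        = ENNReal.ofReal (K ^ β⁻¹ * ((F x) ^ 2 * ((F x) ^ 2 / K) ^ β⁻¹)) := by
          rw [ENNReal.ofReal_mul (by positivity : (0:ℝ) ≤ K ^ β⁻¹),
            ENNReal.ofReal_mul (sq_nonneg _)]
      _ = ENNReal.ofReal (t ^ q) := by rw [htsq] at *; rw [hreal]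
      _ = ((‖F x‖₊ : ℝ≥0∞)) ^ q := by
          rw [← enorm_eq_nnnorm, ← ofReal_norm, ENNReal.ofReal_rpow_of_nonneg ht0 hq0.le]
  -- combine
  have hcomb : ∫⁻ x, ((‖f x‖₊ : ℝ≥0∞)) ^ q ∂μ ≤ ENNReal.ofReal (K ^ β⁻¹ * (4 * E)) := by
    have h0 : (fun x => ((‖f x‖₊ : ℝ≥0∞)) ^ q) =ᵐ[μ.restrict tᶜ] 0 :=
      hAE.ae_eq_zero_compl.mono fun x hx => by
        simp only [Pi.zero_apply] at hx ⊢
        rw [hx]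
        simp [ENNReal.zero_rpow_of_pos hq0]
    have hzero : ∫⁻ x in tᶜ, ((‖f x‖₊ : ℝ≥0∞)) ^ q ∂μ = 0 := by
      rw [lintegral_congr_ae h0]
      simp
    rw [← lintegral_add_compl (fun x => ((‖f x‖₊ : ℝ≥0∞)) ^ q) ht, hzero, add_zero]
    calc ∫⁻ x, ((‖f x‖₊ : ℝ≥0∞)) ^ q ∂(μ.restrict t)
        = ∫⁻ x, ((‖F x‖₊ : ℝ≥0∞)) ^ q ∂(μ.restrict t) :=
          lintegral_congr_ae ((ae_restrict_of_ae hfF).mono fun x hx => by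
            dsimp only; rw [hx])
      _ = ∫⁻ x, ENNReal.ofReal (K ^ β⁻¹) * (∫⁻ l in Ioi (0:ℝ), G l x)
            ∂(μ.restrict t) := by
          refine lintegral_congr fun x => ?_
          rw [hA x, hptq x]
      _ = ENNReal.ofReal (K ^ β⁻¹) *
            ∫⁻ x, (∫⁻ l in Ioi (0:ℝ), G l x) ∂(μ.restrict t) :=
          lintegral_const_mul' _ _ ENNReal.ofReal_ne_top
      _ = ENNReal.ofReal (K ^ β⁻¹) *
            ∫⁻ l in Ioi (0:ℝ), ∫⁻ x, G l x ∂(μ.restrict t) := by rw [hswap]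
      _ ≤ ENNReal.ofReal (K ^ β⁻¹) * (4 * ENNReal.ofReal E) := by
          refine mul_le_mul_right ?_ _
          calc ∫⁻ l in Ioi (0:ℝ), ∫⁻ x, G l x ∂(μ.restrict t)
              ≤ ∫⁻ l in Ioi (0:ℝ), 4 * (eLpNorm (h l) 2 μ) ^ 2 :=
                lintegral_mono_ae ((ae_restrict_iff' measurableSet_Ioi).2
                  (ae_of_all _ stepC))
            _ = 4 * ∫⁻ l in Ioi (0:ℝ), (eLpNorm (h l) 2 μ) ^ 2 :=
                lintegral_const_mul' _ _ (by norm_num)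
            _ ≤ 4 * ENNReal.ofReal E := mul_le_mul_right h_int _
      _ = ENNReal.ofReal (K ^ β⁻¹ * (4 * E)) := by
          rw [ENNReal.ofReal_mul (by positivity : (0:ℝ) ≤ K ^ β⁻¹),
            ENNReal.ofReal_mul (by norm_num : (0:ℝ) ≤ 4), ENNReal.ofReal_ofNat]
  -- final exponent arithmetic
  have hβq : β * q = 2 * (β + 1) := by rw [hq]; field_simp; try ring
  have hqne : q ≠ 0 := hq0.ne'
  have hexp : β⁻¹ * (1/q) + 1/q = 1/2 := by
    rw [hq]
    have hβ1 : (1:ℝ) + 1/β ≠ 0 := by positivity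
    field_simp
    try ring
  have hfinal : (K ^ β⁻¹ * (4 * E)) ^ (1/q) = 2 * C ^ (1 / (β * q)) * Real.sqrt E := by
    have h2 : (0:ℝ) < 4 := by norm_num
    have e1 : (K ^ β⁻¹ * (4 * E)) = 4 ^ (β⁻¹ + 1) * C ^ β⁻¹ * E ^ (β⁻¹ + 1) := by
      rw [hKdef, Real.mul_rpow (by positivity) hE.le, Real.mul_rpow h2.le hC.le,
        Real.rpow_add h2, Real.rpow_add hE, Real.rpow_one, Real.rpow_one]
      ring
    rw [e1, Real.mul_rpow (by positivity) (by positivity),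
      Real.mul_rpow (by positivity) (by positivity),
      ← Real.rpow_mul h2.le, ← Real.rpow_mul hC.le, ← Real.rpow_mul hE.le]
    have eβ : (β⁻¹ + 1) * (1/q) = 1/2 := by rw [add_mul, one_mul]; exact hexp
    have eC : β⁻¹ * (1/q) = 1/(β*q) := by rw [one_div, one_div, mul_inv]
    rw [eβ, eC]
    have e4 : (4:ℝ) ^ (1/2:ℝ) = 2 := by
      rw [show (4:ℝ) = 2^2 by norm_num, ← Real.rpow_natCast 2 2,
        ← Real.rpow_mul (by norm_num : (0:ℝ) ≤ 2)]
      try norm_num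
    rw [e4, Real.sqrt_eq_rpow]
    try ring
  set p := ENNReal.ofReal q with hp
  have hp0 : p ≠ 0 := by
    simp only [hp, ne_eq, ENNReal.ofReal_eq_zero, not_le]
    exact hq0
  have hptop : p ≠ ∞ := ENNReal.ofReal_ne_top
  have hptr : p.toReal = q := ENNReal.toReal_ofReal hq0.le
  have hbound : eLpNorm f p μ ≤ ENNReal.ofReal (2 * C ^ (1/(β*q)) * Real.sqrt E) := by
    rw [eLpNorm_eq_lintegral_rpow_enorm_toReal hp0 hptop, hptr]
    have hKβE : (0:ℝ) < K ^ β⁻¹ * (4 * E) :=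
      mul_pos (Real.rpow_pos_of_pos hK _) (by positivity)
    calc (∫⁻ x, ((‖f x‖₊ : ℝ≥0∞)) ^ q ∂μ) ^ (1/q)
        ≤ (ENNReal.ofReal (K ^ β⁻¹ * (4 * E))) ^ (1/q) :=
          ENNReal.rpow_le_rpow hcomb (by positivity)
      _ = ENNReal.ofReal ((K ^ β⁻¹ * (4 * E)) ^ (1/q)) :=
          ENNReal.ofReal_rpow_of_pos hKβE
      _ = _ := by rw [hfinal]
  exact ⟨⟨hfm, lt_of_le_of_lt hbound ENNReal.ofReal_lt_top⟩, hbound⟩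
end
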